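/- arXiv:2308.10793 — 5 statements merged into one kernel-verified Lean document; each statement's English description precedes it below -/
import Mathlib

section
/- Let R = (W, V, h) be a linear reservoir system with ‖W‖ = λ ∈ (0,1), and fix a bound M > 0 on input streams. Then for every ε > 0 there exist an integer n' ≥ n, an n'×n' unitary complex matrix U, an n'×m complex matrix V', and a continuous readout h' : ℂ^{n'} → ℂ^d which is h with linearly transformed domain, such that the linear reservoir system R' = (λU, V', h') is ε-close to R. -/
/-- Operator norm of a complex matrix w.r.t. Euclidean norms. -/
noncomputable def opNorm {ι κ : Type*} [Fintype ι] [Fintype κ] [DecidableEq κ]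
    (A : Matrix ι κ ℂ) : ℝ :=
  ‖LinearMap.toContinuousLinearMap (Matrix.toEuclideanLin A)‖

/-- The state of the linear reservoir system `(W, V, ·)` at time `t` on input stream `c`. -/
noncomputable def resState {ι κ : Type*} [Fintype ι] [DecidableEq ι] [Fintype κ]
    (W : Matrix ι ι ℂ) (V : Matrix ι κ ℂ)
    (c : ℤ → EuclideanSpace ℂ κ) (t : ℤ) : EuclideanSpace ℂ ι :=
  ∑' k : ℕ, WithLp.toLp 2 (Matrix.mulVec (W ^ k * V) (c (t - k)))

/-- The permutation matrix associated to a permutation `σ` (entry `i j` is `1` iff `σ i = j`). -/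
def permMatrix {ι : Type*} [DecidableEq ι] (σ : Equiv.Perm ι) : Matrix ι ι ℂ :=
  Matrix.of fun i j => if σ i = j then 1 else 0

/-- A permutation is a full cycle iff it acts transitively. -/
def IsFullCycle {ι : Type*} (σ : Equiv.Perm ι) : Prop :=
  ∀ i j : ι, ∃ k : ℕ, (σ ^ k) i = j

def IsContractiveFullCycle {ι : Type*} [DecidableEq ι] (W : Matrix ι ι ℂ) : Prop :=
  ∃ (l : ℝ) (σ : Equiv.Perm ι), 0 < l ∧ l < 1 ∧ IsFullCycle σ ∧ W = (l : ℂ) • permMatrix σ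

/-- Two linear reservoir systems are `ε`-close for input streams bounded by `Mb`. -/
def EpsClose {ι₁ ι₂ κ od : Type*} [Fintype ι₁] [DecidableEq ι₁] [Fintype ι₂] [DecidableEq ι₂]
    [Fintype κ] [Fintype od] (Mb ε : ℝ)
    (W₁ : Matrix ι₁ ι₁ ℂ) (V₁ : Matrix ι₁ κ ℂ) (h₁ : EuclideanSpace ℂ ι₁ → EuclideanSpace ℂ od)
    (W₂ : Matrix ι₂ ι₂ ℂ) (V₂ : Matrix ι₂ κ ℂ) (h₂ : EuclideanSpace ℂ ι₂ → EuclideanSpace ℂ od) :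
    Prop :=
  ∀ c : ℤ → EuclideanSpace ℂ κ, (∀ t : ℤ, t ≤ 0 → ‖c t‖ ≤ Mb) →
    ∀ t : ℤ, t ≤ 0 → ‖h₁ (resState W₁ V₁ c t) - h₂ (resState W₂ V₂ c t)‖ < ε

/-- `h'` is `h` with linearly transformed domain. -/
def LinTransformedDomain {ι₁ ι₂ od : Type*} [Fintype ι₂]
    (h : EuclideanSpace ℂ ι₁ → EuclideanSpace ℂ od)
    (h' : EuclideanSpace ℂ ι₂ → EuclideanSpace ℂ od) : Prop :=
  ∃ A : Matrix ι₁ ι₂ ℂ, ∀ x : EuclideanSpace ℂ ι₂, h' x = h (WithLp.toLp 2 (Matrix.mulVec A x))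

/-! ### Auxiliary material -/

open scoped Matrix.Norms.L2Operator
set_option linter.unusedSectionVars false
set_option linter.unusedVariables false
set_option maxHeartbeats 1000000

section PM
variable {ι : Type*} [DecidableEq ι] [Fintype ι]

private lemma permMatrix_mul_eq {κ : Type*} [Fintype κ] (σ : Equiv.Perm ι) (Q : Matrix ι κ ℂ) :
    permMatrix σ * Q = Matrix.of fun i j => Q (σ i) j := by
  ext i j
  simp [Matrix.mul_apply, permMatrix]

private lemma permMatrix_one : permMatrix (1 : Equiv.Perm ι) = 1 := by
  ext i j
  simp [permMatrix, Matrix.one_apply, eq_comm]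
  congr 1

private lemma permMatrix_pow (σ : Equiv.Perm ι) (k : ℕ) :
    permMatrix σ ^ k = permMatrix (σ ^ k) := by
  induction k with
  | zero =>
    ext i j
    simp [permMatrix, Matrix.one_apply, eq_comm]
  | succ k ih =>
    rw [pow_succ', ih, permMatrix_mul_eq, pow_succ]
    ext i j
    simp [permMatrix, Equiv.Perm.mul_apply]
    congr 1

private lemma permMatrix_unitary (σ : Equiv.Perm ι) :
    permMatrix σ ∈ Matrix.unitaryGroup ι ℂ := by
  rw [Matrix.mem_unitaryGroup_iff]
  ext i j
  simp only [Matrix.mul_apply, permMatrix, Matrix.conjTranspose_apply, Matrix.of_apply,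
    Matrix.one_apply, mul_ite, ite_mul, one_mul, mul_one, mul_zero, zero_mul, star_one, star_zero,
    apply_ite (star : ℂ → ℂ)]
  simp [Finset.sum_ite_eq, EmbeddingLike.apply_eq_iff_eq, eq_comm]
end PM

section Analysis

variable {ι κ : Type*} [Fintype ι] [DecidableEq ι] [Fintype κ] [DecidableEq κ]

private noncomputable def mulVecCLM (A : Matrix ι κ ℂ) :
    EuclideanSpace ℂ κ →L[ℂ] EuclideanSpace ℂ ι :=
  LinearMap.toContinuousLinearMap (Matrix.toEuclideanLin A)

private lemma mulVecCLM_apply (A : Matrix ι κ ℂ) (x : EuclideanSpace ℂ κ) :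
    mulVecCLM A x = (EuclideanSpace.equiv ι ℂ).symm (A.mulVec x) := rfl

private lemma norm_mulVec_le (A : Matrix ι κ ℂ) (x : EuclideanSpace ℂ κ) :
    ‖(EuclideanSpace.equiv ι ℂ).symm (A.mulVec x)‖ ≤ ‖A‖ * ‖x‖ :=
  Matrix.l2_opNorm_mulVec A x

private lemma matrix_norm_le_of (A : Matrix ι κ ℂ) {c : ℝ} (hc : 0 ≤ c)
    (h : ∀ x : EuclideanSpace ℂ κ, ‖(EuclideanSpace.equiv ι ℂ).symm (A.mulVec x)‖ ≤ c * ‖x‖) :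
    ‖A‖ ≤ c :=
  ContinuousLinearMap.opNorm_le_bound _ hc h

private lemma matrix_norm_one_le : ‖(1 : Matrix ι ι ℂ)‖ ≤ 1 := by
  apply matrix_norm_le_of _ zero_le_one
  intro x
  rw [Matrix.one_mulVec, one_mul]
  exact le_of_eq rfl

private lemma unitary_norm_le (U : Matrix ι ι ℂ) (hU : U ∈ Matrix.unitaryGroup ι ℂ) :
    ‖U‖ ≤ 1 := by
  have h1 : ‖star U * U‖ = ‖U‖ * ‖U‖ := Matrix.l2_opNorm_conjTranspose_mul_self U
  have h2 : star U * U = 1 := hU.1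
  have h3 : ‖U‖ * ‖U‖ ≤ 1 := by
    rw [← h1, h2]; exact matrix_norm_one_le
  nlinarith [norm_nonneg U]

private lemma resState_eq (W : Matrix ι ι ℂ) (V : Matrix ι κ ℂ)
    (c : ℤ → EuclideanSpace ℂ κ) (t : ℤ) :
    resState W V c t
      = ∑' k : ℕ, (EuclideanSpace.equiv ι ℂ).symm ((W ^ k * V).mulVec (c (t - k))) := rfl

private lemma norm_pow_mul_le (W : Matrix ι ι ℂ) (V : Matrix ι κ ℂ) {lam : ℝ} (hW : ‖W‖ ≤ lam) :
    ∀ k : ℕ, ‖W ^ k * V‖ ≤ ‖V‖ * lam ^ k := by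
  have hl0 : 0 ≤ lam := le_trans (norm_nonneg W) hW
  intro k
  induction k with
  | zero => simp
  | succ k ih =>
    rw [pow_succ', Matrix.mul_assoc]
    calc ‖W * (W ^ k * V)‖ ≤ ‖W‖ * ‖W ^ k * V‖ := Matrix.l2_opNorm_mul _ _
    _ ≤ lam * (‖V‖ * lam ^ k) := by
        apply mul_le_mul hW ih (norm_nonneg _) hl0
    _ = ‖V‖ * lam ^ (k + 1) := by ring

private lemma summable_terms (B : ℕ → Matrix ι κ ℂ) {C lam : ℝ} (hl0 : 0 ≤ lam) (hl1 : lam < 1)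
    (hB : ∀ k, ‖B k‖ ≤ C * lam ^ k) (c : ℤ → EuclideanSpace ℂ κ) {M : ℝ}
    (hc : ∀ s : ℤ, s ≤ 0 → ‖c s‖ ≤ M) {t : ℤ} (ht : t ≤ 0) :
    Summable (fun k : ℕ => (EuclideanSpace.equiv ι ℂ).symm ((B k).mulVec (c (t - k)))) := by
  have hM : 0 ≤ M := le_trans (norm_nonneg _) (hc t ht)
  apply Summable.of_norm
  refine Summable.of_nonneg_of_le (fun k => norm_nonneg _) (fun k => ?_)
    ((summable_geometric_of_lt_one hl0 hl1).mul_left (C * M))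
  · calc ‖(EuclideanSpace.equiv ι ℂ).symm ((B k).mulVec (c (t - k)))‖
        ≤ ‖B k‖ * ‖c (t - k)‖ := norm_mulVec_le _ _
      _ ≤ (C * lam ^ k) * M := by
          apply mul_le_mul (hB k) (hc _ (by omega)) (norm_nonneg _)
          exact le_trans (norm_nonneg _) (hB k)
      _ = (C * M) * lam ^ k := by ring

private lemma norm_resState_le (W : Matrix ι ι ℂ) (V : Matrix ι κ ℂ) {C lam : ℝ}
    (hl0 : 0 ≤ lam) (hl1 : lam < 1)
    (hB : ∀ k, ‖W ^ k * V‖ ≤ C * lam ^ k) (c : ℤ → EuclideanSpace ℂ κ) {M : ℝ} (hM : 0 ≤ M)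
    (hc : ∀ s : ℤ, s ≤ 0 → ‖c s‖ ≤ M) {t : ℤ} (ht : t ≤ 0) :
    ‖resState W V c t‖ ≤ C * M * (1 - lam)⁻¹ := by
  rw [resState_eq]
  have hsum := summable_terms (fun k => W ^ k * V) hl0 hl1 hB c hc ht
  calc ‖∑' k : ℕ, (EuclideanSpace.equiv ι ℂ).symm ((W ^ k * V).mulVec (c (t - k)))‖
      ≤ ∑' k : ℕ, ‖(EuclideanSpace.equiv ι ℂ).symm ((W ^ k * V).mulVec (c (t - k)))‖ :=
        norm_tsum_le_tsum_norm hsum.norm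
    _ ≤ ∑' k : ℕ, (C * M) * lam ^ k := by
        refine Summable.tsum_le_tsum (fun k => ?_) hsum.norm
          ((summable_geometric_of_lt_one hl0 hl1).mul_left _)
        calc ‖(EuclideanSpace.equiv ι ℂ).symm ((W ^ k * V).mulVec (c (t - k)))‖
            ≤ ‖W ^ k * V‖ * ‖c (t - k)‖ := norm_mulVec_le _ _
          _ ≤ (C * lam ^ k) * M := by
              apply mul_le_mul (hB k) (hc _ (by omega)) (norm_nonneg _)
              exact le_trans (norm_nonneg _) (hB k)
          _ = (C * M) * lam ^ k := by ring
    _ = C * M * (1 - lam)⁻¹ := by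
        rw [tsum_mul_left, tsum_geometric_of_lt_one hl0 hl1]

end Analysis

private lemma tail_bound {C lam : ℝ} (hl0 : 0 ≤ lam) (hl1 : lam < 1) (T : ℕ)
    (g : ℕ → ℝ) (hgsum : Summable g) (hg0 : ∀ k < T, g k = 0)
    (hgle : ∀ k, g k ≤ C * lam ^ k) :
    ∑' k, g k ≤ C * lam ^ T * (1 - lam)⁻¹ := by
  calc ∑' k, g k = (∑ k ∈ Finset.range T, g k) + ∑' k : ℕ, g (k + T) :=
        (Summable.sum_add_tsum_nat_add T hgsum).symm
    _ = ∑' k : ℕ, g (k + T) := by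
        rw [Finset.sum_eq_zero fun k hk => hg0 k (Finset.mem_range.mp hk), zero_add]
    _ ≤ ∑' k : ℕ, (C * lam ^ T) * lam ^ k := by
        refine Summable.tsum_le_tsum (fun k => ?_) ((summable_nat_add_iff T).mpr hgsum)
          ((summable_geometric_of_lt_one hl0 hl1).mul_left _)
        calc g (k + T) ≤ C * lam ^ (k + T) := hgle _
          _ = (C * lam ^ T) * lam ^ k := by ring
    _ = C * lam ^ T * (1 - lam)⁻¹ := by
        rw [tsum_mul_left, tsum_geometric_of_lt_one hl0 hl1]

section Diff
variable {ι₁ ι₂ κ : Type*} [Fintype ι₁] [DecidableEq ι₁] [Fintype ι₂] [DecidableEq ι₂]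
  [Fintype κ] [DecidableEq κ]

private lemma mulVec_resState (A : Matrix ι₁ ι₂ ℂ) (W₂ : Matrix ι₂ ι₂ ℂ) (V₂ : Matrix ι₂ κ ℂ)
    (c : ℤ → EuclideanSpace ℂ κ) (t : ℤ)
    (hsum : Summable (fun k : ℕ =>
      (EuclideanSpace.equiv ι₂ ℂ).symm ((W₂ ^ k * V₂).mulVec (c (t - k))))) :
    (EuclideanSpace.equiv ι₁ ℂ).symm (A.mulVec (resState W₂ V₂ c t))
      = ∑' k : ℕ, (EuclideanSpace.equiv ι₁ ℂ).symm
          ((A * (W₂ ^ k * V₂)).mulVec (c (t - k))) := by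
  rw [← mulVecCLM_apply, resState_eq]
  rw [← (hsum.hasSum.mapL (mulVecCLM A)).tsum_eq]
  refine tsum_congr fun k => ?_
  rw [mulVecCLM_apply]
  exact congrArg (EuclideanSpace.equiv ι₁ ℂ).symm
    (Matrix.mulVec_mulVec (c (t - k)) A (W₂ ^ k * V₂))

private lemma state_diff_bound (W₁ : Matrix ι₁ ι₁ ℂ) (V₁ : Matrix ι₁ κ ℂ)
    (W₂ : Matrix ι₂ ι₂ ℂ) (V₂ : Matrix ι₂ κ ℂ) (A : Matrix ι₁ ι₂ ℂ)
    {C₁ C₂ C lam : ℝ} (hl0 : 0 ≤ lam) (hl1 : lam < 1)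
    (hB₁ : ∀ k, ‖W₁ ^ k * V₁‖ ≤ C₁ * lam ^ k)
    (hB₂ : ∀ k, ‖W₂ ^ k * V₂‖ ≤ C₂ * lam ^ k)
    (T : ℕ)
    (hD : ∀ k, ‖W₁ ^ k * V₁ - A * (W₂ ^ k * V₂)‖ ≤ C * lam ^ k)
    (hD0 : ∀ k < T, W₁ ^ k * V₁ - A * (W₂ ^ k * V₂) = 0)
    (c : ℤ → EuclideanSpace ℂ κ) {M : ℝ} (hM : 0 ≤ M)
    (hc : ∀ s : ℤ, s ≤ 0 → ‖c s‖ ≤ M) {t : ℤ} (ht : t ≤ 0) :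
    ‖resState W₁ V₁ c t - (EuclideanSpace.equiv ι₁ ℂ).symm (A.mulVec (resState W₂ V₂ c t))‖
      ≤ C * M * lam ^ T * (1 - lam)⁻¹ := by
  have hsum₁ := summable_terms (fun k => W₁ ^ k * V₁) hl0 hl1 hB₁ c hc ht
  have hsum₂ := summable_terms (fun k => W₂ ^ k * V₂) hl0 hl1 hB₂ c hc ht
  have hA := mulVec_resState A W₂ V₂ c t hsum₂
  have hDb : ∀ k : ℕ, ‖(W₁ ^ k * V₁ - A * (W₂ ^ k * V₂))‖ ≤ C * lam ^ k := hD
  have hsumD := summable_terms (fun k => W₁ ^ k * V₁ - A * (W₂ ^ k * V₂)) hl0 hl1 hDb c hc ht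
  have hsplit : resState W₁ V₁ c t
      - (EuclideanSpace.equiv ι₁ ℂ).symm (A.mulVec (resState W₂ V₂ c t))
      = ∑' k : ℕ, (EuclideanSpace.equiv ι₁ ℂ).symm
          ((W₁ ^ k * V₁ - A * (W₂ ^ k * V₂)).mulVec (c (t - k))) := by
    rw [hA, resState_eq, ← Summable.tsum_sub hsum₁ (by
      have := summable_terms (fun k => A * (W₂ ^ k * V₂)) hl0 hl1 (C := ‖A‖ * C₂) ?_ c hc ht
      · exact this
      · intro k
        calc ‖A * (W₂ ^ k * V₂)‖ ≤ ‖A‖ * ‖W₂ ^ k * V₂‖ := Matrix.l2_opNorm_mul _ _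
          _ ≤ ‖A‖ * (C₂ * lam ^ k) := by
              exact mul_le_mul_of_nonneg_left (hB₂ k) (norm_nonneg _)
          _ = ‖A‖ * C₂ * lam ^ k := by ring)]
    refine tsum_congr fun k => ?_
    simp only [Matrix.sub_mulVec]
    rfl
  rw [hsplit]
  set g : ℕ → ℝ := fun k =>
    ‖(EuclideanSpace.equiv ι₁ ℂ).symm ((W₁ ^ k * V₁ - A * (W₂ ^ k * V₂)).mulVec (c (t - k)))‖
    with hg
  have hgsum : Summable g := hsumD.norm
  have hgle : ∀ k, g k ≤ (C * M) * lam ^ k := by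
    intro k
    calc g k ≤ ‖W₁ ^ k * V₁ - A * (W₂ ^ k * V₂)‖ * ‖c (t - k)‖ := norm_mulVec_le _ _
      _ ≤ (C * lam ^ k) * M := by
          apply mul_le_mul (hD k) (hc _ (by omega)) (norm_nonneg _)
          exact le_trans (norm_nonneg _) (hD k)
      _ = (C * M) * lam ^ k := by ring
  have hg0 : ∀ k < T, g k = 0 := by
    intro k hk
    simp [hg, hD0 k hk]
  calc ‖∑' k : ℕ, (EuclideanSpace.equiv ι₁ ℂ).symm
          ((W₁ ^ k * V₁ - A * (W₂ ^ k * V₂)).mulVec (c (t - k)))‖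
      ≤ ∑' k, g k := norm_tsum_le_tsum_norm hgsum
    _ ≤ (C * M) * lam ^ T * (1 - lam)⁻¹ :=
        tail_bound hl0 hl1 T g hgsum hg0 hgle
    _ = C * M * lam ^ T * (1 - lam)⁻¹ := by ring
end Diff

section Construction
open Fin.NatCast

variable {n m : ℕ} (T : ℕ) [NeZero T]

private def shiftPerm : Equiv.Perm (Fin n ⊕ Fin T × Fin m) :=
  Equiv.sumCongr (Equiv.refl _) (Equiv.prodCongr (Equiv.addRight 1) (Equiv.refl _))

private lemma shiftPerm_pow (k : ℕ) (x : Fin n ⊕ Fin T × Fin m) :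
    ((shiftPerm (n := n) (m := m) T) ^ k) x
      = Sum.map id (Prod.map (· + (k : Fin T)) id) x := by
  induction k with
  | zero => rcases x with p | ⟨r, j⟩ <;> simp
  | succ k ih =>
    rw [pow_succ', Equiv.Perm.mul_apply, ih]
    rcases x with p | ⟨r, j⟩
    · simp [shiftPerm]
    · simp only [shiftPerm, Sum.map_inr, Equiv.sumCongr_apply, Equiv.prodCongr_apply,
        Prod.map, Equiv.coe_addRight, Equiv.refl_apply, id_eq]
      congr 2
      push_cast
      simp only [Nat.cast_succ, add_assoc]

private lemma shiftPerm_pow_T : (shiftPerm (n := n) (m := m) T) ^ T = 1 := by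
  ext x
  rw [shiftPerm_pow]
  rcases x with p | ⟨r, j⟩ <;> simp

variable (W : Matrix (Fin n) (Fin n) ℂ) (V : Matrix (Fin n) (Fin m) ℂ) (lam : ℝ)

private def U0 : Matrix (Fin n ⊕ Fin T × Fin m) (Fin n ⊕ Fin T × Fin m) ℂ :=
  permMatrix (shiftPerm T)

private def V0 : Matrix (Fin n ⊕ Fin T × Fin m) (Fin m) ℂ :=
  Matrix.of fun i j =>
    match i with
    | .inl _ => 0
    | .inr (r, j') => if r = 0 ∧ j' = j then 1 else 0

private def kof (r : Fin T) : ℕ := (T - r.val) % T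

private noncomputable def A0 : Matrix (Fin n) (Fin n ⊕ Fin T × Fin m) ℂ :=
  Matrix.of fun p i =>
    match i with
    | .inl _ => 0
    | .inr (r, j) => ((lam : ℂ)⁻¹) ^ kof T r * ((W ^ kof T r * V) p j)

private lemma key_small {k : ℕ} (hk : k < T) :
    A0 T W V lam * (U0 (n := n) (m := m) T ^ k * V0 (n := n) (m := m) T) = ((lam : ℂ)⁻¹) ^ k • (W ^ k * V) := by
  have hTpos : 0 < T := NeZero.pos T
  set rT : Fin T := ⟨(T - k) % T, Nat.mod_lt _ hTpos⟩ with hrT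
  have hcond : ∀ r : Fin T, r + (k : Fin T) = 0 ↔ r = rT := by
    intro r
    rw [Fin.ext_iff, Fin.ext_iff]
    have hkv : ((k : Fin T)).val = k := Fin.val_cast_of_lt hk
    rw [Fin.val_add, hkv, Fin.val_zero]
    show (r.val + k) % T = 0 ↔ r.val = (T - k) % T
    have hrv := r.isLt
    rcases Nat.eq_zero_or_pos k with rfl | hkpos
    · simp [Nat.mod_self, Nat.mod_eq_of_lt hrv]
    · have h1 : (T - k) % T = T - k := Nat.mod_eq_of_lt (by omega)
      rw [h1]
      constructor
      · intro hmod
        have hdvd : T ∣ (r.val + k) := Nat.dvd_of_mod_eq_zero hmod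
        obtain ⟨q, hq⟩ := hdvd
        have hq2 : q < 2 := by nlinarith [hq]
        interval_cases q <;> omega
      · intro hr
        rw [hr]
        have : T - k + k = T := by omega
        rw [this, Nat.mod_self]
  have hkof : kof T rT = k := by
    show (T - (T - k) % T) % T = k
    rcases Nat.eq_zero_or_pos k with rfl | hkpos
    · simp [Nat.mod_self]
    · have h1 : (T - k) % T = T - k := Nat.mod_eq_of_lt (by omega)
      rw [h1]
      have h2 : T - (T - k) = k := by omega
      rw [h2, Nat.mod_eq_of_lt hk]
  ext p j
  rw [U0, permMatrix_pow, permMatrix_mul_eq]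
  rw [Matrix.mul_apply, Fintype.sum_sum_type]
  have hz : ∀ a : Fin n,
      A0 T W V lam p (Sum.inl a) * (Matrix.of fun i j => V0 (n := n) (m := m) T ((shiftPerm T ^ k) i) j)
        (Sum.inl a) j = 0 := by
    intro a
    show (0 : ℂ) * _ = 0
    rw [zero_mul]
  rw [Finset.sum_congr rfl (fun a _ => hz a), Finset.sum_const_zero, zero_add]
  have hterm : ∀ b : Fin T × Fin m,
      A0 T W V lam p (Sum.inr b) * (Matrix.of fun i j => V0 (n := n) (m := m) T ((shiftPerm T ^ k) i) j)
        (Sum.inr b) j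
      = if b = (rT, j) then ((lam : ℂ)⁻¹) ^ k * ((W ^ k * V) p j) else 0 := by
    rintro ⟨r, j'⟩
    show (((lam : ℂ)⁻¹) ^ kof T r * ((W ^ kof T r * V) p j')) *
        (V0 (n := n) (m := m) T ((shiftPerm T ^ k) (Sum.inr (r, j'))) j) = _
    rw [shiftPerm_pow]
    show (((lam : ℂ)⁻¹) ^ kof T r * ((W ^ kof T r * V) p j')) *
        (if r + (k : Fin T) = 0 ∧ j' = j then (1 : ℂ) else 0) = _
    simp only [hcond]
    by_cases hb : (r, j') = (rT, j)
    · obtain ⟨hr, hj⟩ := Prod.mk.inj hb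
      subst hr; subst hj
      simp [hkof]
    · have : ¬(r = rT ∧ j' = j) := by
        intro ⟨h1, h2⟩; exact hb (by rw [h1, h2])
      simp [this, hb]
  rw [Finset.sum_congr rfl (fun b _ => hterm b)]
  rw [Finset.sum_ite_eq' Finset.univ (rT, j)]
  simp [Matrix.smul_apply, smul_eq_mul]

private lemma key_identity (k : ℕ) :
    A0 T W V lam * (U0 (n := n) (m := m) T ^ k * V0 (n := n) (m := m) T)
      = ((lam : ℂ)⁻¹) ^ (k % T) • (W ^ (k % T) * V) := by
  have hT : 0 < T := NeZero.pos T
  have hU : U0 (n := n) (m := m) T ^ k = U0 T ^ (k % T) := by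
    conv_lhs => rw [← Nat.div_add_mod k T]
    rw [pow_add, pow_mul, U0, permMatrix_pow, shiftPerm_pow_T, permMatrix_one, one_pow, one_mul]
  rw [hU, key_small T W V lam (Nat.mod_lt _ hT)]

private lemma A0_smulU_pow (hlam0 : 0 < lam) (k : ℕ) :
    A0 T W V lam * ((((lam : ℂ) • U0 (n := n) (m := m) T)) ^ k * V0 (n := n) (m := m) T)
      = ((lam : ℂ) ^ (k - k % T)) • (W ^ (k % T) * V) := by
  have hne : (lam : ℂ) ≠ 0 := by
    simp only [ne_eq, Complex.ofReal_eq_zero]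
    exact hlam0.ne'
  have hr : k % T ≤ k := Nat.mod_le _ _
  rw [smul_pow, Matrix.smul_mul, Matrix.mul_smul, key_identity, smul_smul]
  congr 1
  rw [← pow_sub_mul_pow (lam : ℂ) hr, mul_assoc, ← mul_pow, mul_inv_cancel₀ hne, one_pow, mul_one]

private lemma D_zero (hlam0 : 0 < lam) {k : ℕ} (hk : k < T) :
    W ^ k * V - A0 T W V lam * ((((lam : ℂ) • U0 (n := n) (m := m) T)) ^ k * V0 (n := n) (m := m) T) = 0 := by
  rw [A0_smulU_pow T W V lam hlam0, Nat.mod_eq_of_lt hk, Nat.sub_self, pow_zero, one_smul,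
    sub_self]

private lemma D_bound (hlam0 : 0 < lam) (hW : ‖W‖ ≤ lam) (k : ℕ) :
    ‖W ^ k * V - A0 T W V lam * ((((lam : ℂ) • U0 (n := n) (m := m) T)) ^ k * V0 (n := n) (m := m) T)‖
      ≤ (2 * ‖V‖) * lam ^ k := by
  have hr : k % T ≤ k := Nat.mod_le _ _
  rw [A0_smulU_pow T W V lam hlam0]
  have hsc : ‖((lam : ℂ) ^ (k - k % T))‖ = lam ^ (k - k % T) := by
    rw [norm_pow, Complex.norm_real, Real.norm_eq_abs, abs_of_pos hlam0]
  calc ‖W ^ k * V - ((lam : ℂ) ^ (k - k % T)) • (W ^ (k % T) * V)‖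
      ≤ ‖W ^ k * V‖ + ‖((lam : ℂ) ^ (k - k % T)) • (W ^ (k % T) * V)‖ := norm_sub_le _ _
    _ ≤ ‖V‖ * lam ^ k + lam ^ (k - k % T) * (‖V‖ * lam ^ (k % T)) := by
        apply add_le_add (norm_pow_mul_le W V hW k)
        rw [norm_smul, hsc]
        exact mul_le_mul_of_nonneg_left (norm_pow_mul_le W V hW _)
          (pow_nonneg (le_trans (norm_nonneg W) hW) _)
    _ = 2 * ‖V‖ * lam ^ k := by
        rw [← mul_assoc, mul_comm (lam ^ (k - k % T)), mul_assoc, ← pow_add,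
          Nat.sub_add_cancel hr]
        ring

end Construction

section Transport
variable {ι ι' : Type*} [Fintype ι] [DecidableEq ι] [Fintype ι'] [DecidableEq ι']

private lemma submatrix_pow_equiv (X : Matrix ι ι ℂ) (e : ι' ≃ ι) (k : ℕ) :
    (X.submatrix ⇑e ⇑e) ^ k = (X ^ k).submatrix ⇑e ⇑e := by
  induction k with
  | zero => rw [pow_zero, pow_zero, Matrix.submatrix_one_equiv]
  | succ k ih => rw [pow_succ, pow_succ, ih, Matrix.submatrix_mul_equiv]

private lemma norm_reindex (e : ι' ≃ ι) (y : ι → ℂ) :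
    ‖(EuclideanSpace.equiv ι' ℂ).symm (y ∘ ⇑e)‖ = ‖(EuclideanSpace.equiv ι ℂ).symm y‖ := by
  rw [EuclideanSpace.norm_eq, EuclideanSpace.norm_eq]
  congr 1
  exact Fintype.sum_equiv e _ _ (fun i => rfl)

end Transport

theorem unitary_dilation_eps_close
    (n m d : ℕ) (W : Matrix (Fin n) (Fin n) ℂ) (V : Matrix (Fin n) (Fin m) ℂ)
    (h : EuclideanSpace ℂ (Fin n) → EuclideanSpace ℂ (Fin d)) (hh : Continuous h)
    (lam : ℝ) (hWlam : opNorm W = lam) (hlam0 : 0 < lam) (hlam1 : lam < 1)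
    (M : ℝ) (hM : 0 < M) (ε : ℝ) (hε : 0 < ε) :
    ∃ n' : ℕ, n ≤ n' ∧
      ∃ (U : Matrix (Fin n') (Fin n') ℂ) (V' : Matrix (Fin n') (Fin m) ℂ)
        (h' : EuclideanSpace ℂ (Fin n') → EuclideanSpace ℂ (Fin d)),
        U ∈ Matrix.unitaryGroup (Fin n') ℂ ∧
        Continuous h' ∧ LinTransformedDomain h h' ∧
        EpsClose M ε W V h ((lam : ℂ) • U) V' h' := by
  classical
  have hW : ‖W‖ ≤ lam := le_of_eq hWlam
  have hl0 : 0 ≤ lam := hlam0.le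
  have h1m : 0 < 1 - lam := by linarith
  set R := ‖V‖ * M * (1 - lam)⁻¹ with hR
  have hRnn : 0 ≤ R :=
    mul_nonneg (mul_nonneg (norm_nonneg _) hM.le) (inv_nonneg.mpr h1m.le)
  -- uniform continuity on a compact ball
  obtain ⟨δ, hδ0, hδ⟩ := Metric.uniformContinuousOn_iff.mp
    ((isCompact_closedBall (0 : EuclideanSpace ℂ (Fin n)) (R + 1)).uniformContinuousOn_of_continuous
      hh.continuousOn) ε hε
  set δ' := min δ 1 with hδ'
  have hδ'0 : 0 < δ' := lt_min hδ0 one_pos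
  -- choice of T
  set B := 2 * ‖V‖ * M with hBdef
  have hBnn : 0 ≤ B := by positivity
  have hε' : 0 < δ' * (1 - lam) / (B + 1) := div_pos (mul_pos hδ'0 h1m) (by linarith)
  obtain ⟨T₀, hT₀⟩ := exists_pow_lt_of_lt_one hε' hlam1
  set T := T₀ + 1 with hT
  haveI : NeZero T := ⟨Nat.succ_ne_zero _⟩
  have hlamT : lam ^ T < δ' * (1 - lam) / (B + 1) :=
    lt_of_le_of_lt (pow_le_pow_of_le_one hl0 hlam1.le (Nat.le_succ _)) hT₀
  have herr : B * lam ^ T * (1 - lam)⁻¹ < δ' := by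
    calc B * lam ^ T * (1 - lam)⁻¹
        ≤ B * (δ' * (1 - lam) / (B + 1)) * (1 - lam)⁻¹ := by
          exact mul_le_mul_of_nonneg_right
            (mul_le_mul_of_nonneg_left hlamT.le hBnn) (inv_nonneg.mpr h1m.le)
      _ = δ' * (B / (B + 1)) := by
          field_simp
      _ < δ' := by
          have hq : B / (B + 1) < 1 := by
            rw [div_lt_one (by linarith)]
            linarith
          calc δ' * (B / (B + 1)) < δ' * 1 :=
                mul_lt_mul_of_pos_left hq hδ'0
            _ = δ' := mul_one _
  -- the construction
  set n' := n + T * m with hn'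
  set e : (Fin n ⊕ Fin T × Fin m) ≃ Fin n' :=
    (Equiv.sumCongr (Equiv.refl (Fin n)) finProdFinEquiv).trans finSumFinEquiv with he
  set W₂ : Matrix (Fin n ⊕ Fin T × Fin m) (Fin n ⊕ Fin T × Fin m) ℂ :=
    (lam : ℂ) • U0 (n := n) (m := m) T with hW₂
  set U' : Matrix (Fin n') (Fin n') ℂ := (U0 (n := n) (m := m) T).submatrix ⇑e.symm ⇑e.symm
    with hU'
  set V' : Matrix (Fin n') (Fin m) ℂ := (V0 (n := n) (m := m) T).submatrix ⇑e.symm id with hV'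
  set A' : Matrix (Fin n) (Fin n') ℂ := (A0 T W V lam).submatrix id ⇑e.symm with hA'
  have hsubW : (lam : ℂ) • U' = W₂.submatrix ⇑e.symm ⇑e.symm := by
    ext i j
    rfl
  -- bounds
  have hB₁ : ∀ k, ‖W ^ k * V‖ ≤ ‖V‖ * lam ^ k := norm_pow_mul_le W V hW
  have hWU : ‖W₂‖ ≤ lam := by
    rw [hW₂, norm_smul, Complex.norm_real, Real.norm_eq_abs, abs_of_pos hlam0]
    have := unitary_norm_le (U0 (n := n) (m := m) T) (permMatrix_unitary _)
    calc lam * ‖U0 (n := n) (m := m) T‖ ≤ lam * 1 :=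
          mul_le_mul_of_nonneg_left this hl0
      _ = lam := mul_one _
  have hB₂ : ∀ k, ‖W₂ ^ k * V0 (n := n) (m := m) T‖ ≤ ‖V0 (n := n) (m := m) T‖ * lam ^ k :=
    norm_pow_mul_le _ _ hWU
  have hD : ∀ k, ‖W ^ k * V - A0 T W V lam * (W₂ ^ k * V0 (n := n) (m := m) T)‖ ≤ (2 * ‖V‖) * lam ^ k :=
    fun k => D_bound T W V lam hlam0 hW k
  have hD0 : ∀ k < T, W ^ k * V - A0 T W V lam * (W₂ ^ k * V0 (n := n) (m := m) T) = 0 :=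
    fun k hk => D_zero T W V lam hlam0 hk
  -- matrix identity for the reindexed system
  have hmat : ∀ k : ℕ, ((lam : ℂ) • U') ^ k * V' = (W₂ ^ k * V0 (n := n) (m := m) T).submatrix ⇑e.symm id := by
    intro k
    rw [hsubW, submatrix_pow_equiv, hV', Matrix.submatrix_mul_equiv]
  have hmatA : ∀ k : ℕ, A' * (((lam : ℂ) • U') ^ k * V') = A0 T W V lam * (W₂ ^ k * V0 (n := n) (m := m) T) := by
    intro k
    rw [hmat, hA', Matrix.submatrix_mul_equiv, Matrix.submatrix_id_id]
  refine ⟨n', Nat.le_add_right _ _, U', V', fun x => h (WithLp.toLp 2 (A'.mulVec x)), ?_, ?_, ⟨A', fun x => rfl⟩,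
    ?_⟩
  · -- unitarity
    rw [Matrix.mem_unitaryGroup_iff]
    have h2 : U0 (n := n) (m := m) T * star (U0 (n := n) (m := m) T) = 1 :=
      Matrix.mem_unitaryGroup_iff.mp (permMatrix_unitary _)
    calc U' * star U'
        = (U0 (n := n) (m := m) T * star (U0 (n := n) (m := m) T)).submatrix ⇑e.symm ⇑e.symm := by
          rw [hU', Matrix.star_eq_conjTranspose, Matrix.star_eq_conjTranspose,
            Matrix.conjTranspose_submatrix, Matrix.submatrix_mul_equiv]
      _ = 1 := by rw [h2, Matrix.submatrix_one_equiv]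
  · -- continuity
    exact hh.comp (mulVecCLM A').continuous
  · -- ε-closeness
    intro c hc t ht
    have hsum₂ := summable_terms (fun k => W₂ ^ k * V0 (n := n) (m := m) T) hl0 hlam1 hB₂ c hc ht
    set z := (EuclideanSpace.equiv (Fin n) ℂ).symm
      ((A0 T W V lam).mulVec (resState W₂ (V0 (n := n) (m := m) T) c t)) with hz
    -- the transported readout agrees with z
    have hsum' : Summable (fun k : ℕ => (EuclideanSpace.equiv (Fin n') ℂ).symm
        (((((lam : ℂ) • U') ^ k * V')).mulVec (c (t - k)))) := by
      apply Summable.of_norm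
      have hnorm : ∀ k : ℕ, ‖(EuclideanSpace.equiv (Fin n') ℂ).symm
          (((((lam : ℂ) • U') ^ k * V')).mulVec (c (t - k)))‖
          = ‖(EuclideanSpace.equiv (Fin n ⊕ Fin T × Fin m) ℂ).symm
              ((W₂ ^ k * V0 (n := n) (m := m) T).mulVec (c (t - k)))‖ := by
        intro k
        rw [hmat]
        have hid : (W₂ ^ k * V0 (n := n) (m := m) T).submatrix (⇑e.symm) id
            = (W₂ ^ k * V0 (n := n) (m := m) T).submatrix (⇑e.symm) ⇑(Equiv.refl (Fin m)) := rfl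
        rw [hid, Matrix.submatrix_mulVec_equiv _ _ _ (Equiv.refl (Fin m))]
        simp only [Equiv.refl_symm, Equiv.coe_refl, Function.comp_id]
        exact norm_reindex e.symm _
      simp only [hnorm]
      exact hsum₂.norm
    have hstate : (EuclideanSpace.equiv (Fin n) ℂ).symm
        (A'.mulVec (resState ((lam : ℂ) • U') V' c t)) = z := by
      rw [mulVec_resState A' _ _ c t hsum', hz,
        mulVec_resState (A0 T W V lam) _ _ c t hsum₂]
      exact tsum_congr fun k => by rw [hmatA]
    have hout : h (WithLp.toLp 2 (A'.mulVec (resState ((lam : ℂ) • U') V' c t))) = h z := congrArg h hstate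
    -- the distance estimate
    have hdiff : ‖resState W V c t - z‖ ≤ (2 * ‖V‖) * M * lam ^ T * (1 - lam)⁻¹ :=
      state_diff_bound W V W₂ (V0 (n := n) (m := m) T) (A0 T W V lam) hl0 hlam1 hB₁ hB₂ T hD hD0 c hM.le hc ht
    have herr2 : (2 * ‖V‖) * M * lam ^ T * (1 - lam)⁻¹ = B * lam ^ T * (1 - lam)⁻¹ := by
      rw [hBdef]
    have hdiff' : ‖resState W V c t - z‖ < δ' := lt_of_le_of_lt (herr2 ▸ hdiff) herr
    have hx₁ : ‖resState W V c t‖ ≤ R :=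
      norm_resState_le W V hl0 hlam1 hB₁ c hM.le hc ht
    have hzn : ‖z‖ ≤ R + 1 := by
      have : z = resState W V c t - (resState W V c t - z) := by abel
      rw [this]
      calc ‖resState W V c t - (resState W V c t - z)‖
          ≤ ‖resState W V c t‖ + ‖resState W V c t - z‖ := norm_sub_le _ _
        _ ≤ R + 1 := add_le_add hx₁ (le_trans hdiff'.le (min_le_right _ _))
    have hmem₁ : resState W V c t ∈ Metric.closedBall (0 : EuclideanSpace ℂ (Fin n)) (R + 1) :=
      mem_closedBall_zero_iff.mpr (le_trans hx₁ (by linarith))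
    have hmem₂ : z ∈ Metric.closedBall (0 : EuclideanSpace ℂ (Fin n)) (R + 1) :=
      mem_closedBall_zero_iff.mpr hzn
    have hd : dist (resState W V c t) z < δ := by
      rw [dist_eq_norm]
      exact lt_of_lt_of_le hdiff' (min_le_left _ _)
    have := hδ (resState W V c t) hmem₁ z hmem₂ hd
    rw [dist_eq_norm] at this
    calc ‖h (resState W V c t) - h (WithLp.toLp 2 (A'.mulVec (resState ((lam : ℂ) • U') V' c t)))‖
        = ‖h (resState W V c t) - h z‖ := by rw [hout]
      _ < ε := this
end

section
/- For every n×m real matrix V and every δ > 0 there exist a positive integer N, a positive integer k with gcd(k, n) = 1, and matrices F₁, …, F_k, each an n×m matrix all of whose entries lie in {−1, 1}, such that ‖V − (1/N) ∑_{j=1}^k F_j‖ < δ, where ‖·‖ denotes the operator norm. -/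
/-- Operator norm of a real matrix w.r.t. Euclidean norms. -/
noncomputable def opNormR {ι κ : Type*} [Fintype ι] [Fintype κ] [DecidableEq κ]
    (A : Matrix ι κ ℝ) : ℝ :=
  ‖LinearMap.toContinuousLinearMap (Matrix.toEuclideanLin A)‖

/-- The operator norm is at most the Frobenius norm. -/
lemma opNormR_le_frobenius {n m : ℕ} (A : Matrix (Fin n) (Fin m) ℝ) :
    opNormR A ≤ Real.sqrt (∑ i, ∑ j, (A i j)^2) := by
  unfold opNormR
  apply ContinuousLinearMap.opNorm_le_bound _ (Real.sqrt_nonneg _)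
  intro x
  simp only [LinearMap.coe_toContinuousLinearMap']
  rw [EuclideanSpace.norm_eq, EuclideanSpace.norm_eq, ← Real.sqrt_mul (by positivity)]
  apply Real.sqrt_le_sqrt
  simp only [Matrix.toEuclideanLin_apply, PiLp.toLp_apply, Matrix.mulVec,
    dotProduct, Real.norm_eq_abs, sq_abs]
  rw [Finset.sum_mul]
  apply Finset.sum_le_sum
  intro i _
  exact Finset.sum_mul_sq_le_sq_mul_sq _ _ _

lemma sum_pm_aux (k p : ℕ) (hp : p ≤ k) :
    ∑ j : Fin k, (if (j : ℕ) < p then (1:ℝ) else -1) = 2 * p - k := by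
  rw [Fin.sum_univ_eq_sum_range (fun j => if j < p then (1:ℝ) else -1)]
  rw [Finset.sum_ite]
  have h1 : (Finset.range k).filter (fun j => j < p) = Finset.range p := by
    ext j; simp only [Finset.mem_filter, Finset.mem_range]; omega
  have h2 : ((Finset.range k).filter (fun j => ¬ j < p)).card = k - p := by
    have := Finset.card_filter_add_card_filter_not (s := Finset.range k)
      (p := fun j => j < p)
    simp only [h1, Finset.card_range] at this
    omega
  rw [h1]
  simp only [Finset.sum_const, Finset.card_range, nsmul_eq_mul, mul_one, mul_neg_one, h2]
  push_cast [hp]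
  ring

theorem approx_real_matrix_by_pm_one
    (n m : ℕ) (hn : 0 < n) (hm : 0 < m) (V : Matrix (Fin n) (Fin m) ℝ)
    (δ : ℝ) (hδ : 0 < δ) :
    ∃ (N k : ℕ), 0 < N ∧ 0 < k ∧ Nat.gcd k n = 1 ∧
      ∃ F : Fin k → Matrix (Fin n) (Fin m) ℝ,
        (∀ (j : Fin k) (i : Fin n) (l : Fin m), F j i l = 1 ∨ F j i l = -1) ∧
        opNormR (V - (N : ℝ)⁻¹ • ∑ j, F j) < δ := by
  -- bound on the entries of V
  set S : ℝ := ∑ i, ∑ l, |V i l| with hS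
  set B : ℕ := ⌈S⌉₊ + 1 with hB
  have hVB : ∀ i l, |V i l| ≤ B := by
    intro i l
    have h1 : |V i l| ≤ S := by
      rw [hS]
      calc |V i l| ≤ ∑ l', |V i l'| :=
            Finset.single_le_sum (f := fun l' => |V i l'|)
              (fun l' _ => abs_nonneg _) (Finset.mem_univ l)
        _ ≤ ∑ i', ∑ l', |V i' l'| :=
            Finset.single_le_sum (f := fun i' => ∑ l', |V i' l'|)
              (fun i' _ => Finset.sum_nonneg fun l' _ => abs_nonneg _) (Finset.mem_univ i)
    calc |V i l| ≤ S := h1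
      _ ≤ ⌈S⌉₊ := Nat.le_ceil S
      _ ≤ B := by rw [hB]; push_cast; linarith
  -- choose N
  set N : ℕ := ⌈2 * Real.sqrt (n * m) / δ⌉₊ + 1 with hNdef
  have hN : 0 < N := Nat.succ_pos _
  have hNR : (0:ℝ) < N := by exact_mod_cast hN
  have hNδ : 2 * Real.sqrt (n * m) / δ < N := by
    calc 2 * Real.sqrt (n * m) / δ ≤ ⌈2 * Real.sqrt (n * m) / δ⌉₊ := Nat.le_ceil _
      _ < N := by rw [hNdef]; push_cast; linarith
  -- choose k coprime to n
  set k : ℕ := n * (N * B) + 1 with hkdef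
  have hk : 0 < k := Nat.succ_pos _
  have hgcd : Nat.gcd k n = 1 := by
    have h := (Nat.coprime_add_mul_left_left 1 n (N * B)).mpr (Nat.coprime_one_left n)
    rwa [Nat.add_comm] at h
  have hNBk : (N : ℝ) * B ≤ k := by
    have : N * B ≤ k := by
      calc N * B ≤ n * (N * B) := Nat.le_mul_of_pos_left _ hn
        _ ≤ k := Nat.le_succ _
    exact_mod_cast this
  -- pointwise construction
  set x : Fin n → Fin m → ℝ := fun i l => N * V i l + k with hxdef
  have hx0 : ∀ i l, 0 ≤ x i l := by
    intro i l
    have h1 := hVB i l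
    have h2 : -(N : ℝ) * B ≤ N * V i l := by
      have := abs_le.mp h1
      nlinarith
    simp only [hxdef]
    nlinarith
  have hx2k : ∀ i l, x i l ≤ 2 * k := by
    intro i l
    have h1 := hVB i l
    have h2 : (N : ℝ) * V i l ≤ N * B := by
      have := abs_le.mp h1
      nlinarith
    simp only [hxdef]
    nlinarith
  set p : Fin n → Fin m → ℕ := fun i l => (⌊x i l / 2⌋).toNat with hpdef
  have hpfloor : ∀ i l, (p i l : ℝ) = ⌊x i l / 2⌋ := by
    intro i l
    have h0 : (0:ℤ) ≤ ⌊x i l / 2⌋ :=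
      Int.floor_nonneg.mpr (div_nonneg (hx0 i l) (by norm_num))
    simp only [hpdef]
    exact_mod_cast Int.toNat_of_nonneg h0
  have hpk : ∀ i l, p i l ≤ k := by
    intro i l
    have h1 : (⌊x i l / 2⌋ : ℝ) ≤ k := by
      calc (⌊x i l / 2⌋ : ℝ) ≤ x i l / 2 := Int.floor_le _
        _ ≤ k := by
            rw [div_le_iff₀ (by norm_num : (0:ℝ) < 2)]
            linarith [hx2k i l]
    have h2 : (p i l : ℝ) ≤ k := by rw [hpfloor i l]; exact h1
    exact_mod_cast h2
  have happrox : ∀ i l, |2 * (p i l : ℝ) - x i l| ≤ 2 := by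
    intro i l
    rw [hpfloor i l]
    have h1 : (⌊x i l / 2⌋ : ℝ) ≤ x i l / 2 := Int.floor_le _
    have h2 : x i l / 2 < ⌊x i l / 2⌋ + 1 := Int.lt_floor_add_one _
    rw [abs_le]
    constructor <;> linarith
  refine ⟨N, k, hN, hk, hgcd,
    fun j => Matrix.of fun i l => if (j : ℕ) < p i l then 1 else -1, ?_, ?_⟩
  · intro j i l
    by_cases h : (j : ℕ) < p i l <;> simp [h]
  · -- entrywise error bound
    set D := V - (N : ℝ)⁻¹ • ∑ j : Fin k,
      (Matrix.of fun i l => if (j : ℕ) < p i l then (1:ℝ) else -1) with hDdef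
    have hD : ∀ i l, |D i l| ≤ 2 / N := by
      intro i l
      have hsum : (∑ j : Fin k,
          (Matrix.of fun i l => if (j : ℕ) < p i l then (1:ℝ) else -1)) i l
          = 2 * (p i l) - k := by
        rw [Matrix.sum_apply]
        simpa using sum_pm_aux k (p i l) (hpk i l)
      have hDil : D i l = (N : ℝ)⁻¹ * (x i l - 2 * p i l) := by
        simp only [hDdef, Matrix.sub_apply, Matrix.smul_apply, hsum, smul_eq_mul, hxdef]
        field_simp
        ring
      rw [hDil, abs_mul, abs_inv, abs_of_pos hNR, abs_sub_comm]
      rw [div_eq_inv_mul]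
      exact mul_le_mul_of_nonneg_left (happrox i l) (by positivity)
    calc opNormR D ≤ Real.sqrt (∑ i, ∑ l, (D i l)^2) := opNormR_le_frobenius D
      _ ≤ Real.sqrt (n * m * (2 / N)^2) := by
          apply Real.sqrt_le_sqrt
          calc ∑ i, ∑ l, (D i l)^2 ≤ ∑ _i : Fin n, ∑ _l : Fin m, ((2:ℝ) / N)^2 := by
                apply Finset.sum_le_sum; intro i _
                apply Finset.sum_le_sum; intro l _
                calc (D i l)^2 = |D i l|^2 := (sq_abs _).symm
                  _ ≤ ((2:ℝ) / N)^2 := by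
                      apply sq_le_sq'
                      · linarith [hD i l, abs_nonneg (D i l)]
                      · exact hD i l
            _ = n * m * (2 / N)^2 := by
                simp [Finset.sum_const, Finset.card_univ]; ring
      _ = Real.sqrt (n * m) * (2 / N) := by
          rw [Real.sqrt_mul (by positivity), Real.sqrt_sq (by positivity)]
      _ < δ := by
          have h2N : 2 * Real.sqrt (n * m) < N * δ := by
            rw [div_lt_iff₀ hδ] at hNδ; linarith
          rw [mul_comm, div_mul_eq_mul_div, div_lt_iff₀ hNR]
          linarith
end

section
/- For every n×m complex matrix V and every δ > 0 there exist a positive integer N, a positive integer k with gcd(k, n) = 1, and matrices F₁, …, F_k, each an n×m matrix such that either all entries of F_j lie in {−1, 1} or all entries of F_j lie in {−i, i}, such that ‖V − (1/N) ∑_{j=1}^k F_j‖ < δ, where ‖·‖ denotes the operator norm. -/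
section Helpers

lemma coord_le' {ι : Type*} [Fintype ι] (x : EuclideanSpace ℂ ι) (j : ι) : ‖x j‖ ≤ ‖x‖ := by
  have h2 : ‖x j‖ ^ 2 ≤ ∑ i, ‖x i‖ ^ 2 :=
    Finset.single_le_sum (f := fun i => ‖x i‖ ^ 2) (fun i _ => sq_nonneg _) (Finset.mem_univ j)
  calc ‖x j‖ = Real.sqrt (‖x j‖ ^ 2) := (Real.sqrt_sq (norm_nonneg _)).symm
    _ ≤ Real.sqrt (∑ i, ‖x i‖ ^ 2) := Real.sqrt_le_sqrt h2
    _ = ‖x‖ := (EuclideanSpace.norm_eq x).symm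

lemma euclid_norm_le_sum' {ι : Type*} [Fintype ι] (x : EuclideanSpace ℂ ι) :
    ‖x‖ ≤ ∑ i, ‖x i‖ := by
  rw [EuclideanSpace.norm_eq]
  have h : ∑ i, ‖x i‖ ^ 2 ≤ (∑ i, ‖x i‖) ^ 2 :=
    Finset.sum_sq_le_sq_sum_of_nonneg (fun i _ => norm_nonneg _)
  calc Real.sqrt (∑ i, ‖x i‖ ^ 2) ≤ Real.sqrt ((∑ i, ‖x i‖) ^ 2) := Real.sqrt_le_sqrt h
    _ = ∑ i, ‖x i‖ := Real.sqrt_sq (Finset.sum_nonneg fun i _ => norm_nonneg _)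

lemma sum_if_lt' (a s : ℕ) (hs : s ≤ a) (x y : ℂ) :
    ∑ j : Fin a, (if (j : ℕ) < s then x else y) = s * x + ((a : ℂ) - s) * y := by
  rw [Fin.sum_univ_eq_sum_range (fun j => if j < s then x else y)]
  rw [← Finset.sum_range_add_sum_Ico _ hs]
  have h1 : ∑ j ∈ Finset.range s, (if j < s then x else y) = s * x := by
    rw [Finset.sum_congr rfl (fun j hj => if_pos (Finset.mem_range.mp hj))]
    simp [mul_comm]
  have h2 : ∑ j ∈ Finset.Ico s a, (if j < s then x else y) = ((a : ℂ) - s) * y := by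
    rw [Finset.sum_congr rfl (fun j hj => if_neg (not_lt.mpr (Finset.mem_Ico.mp hj).1))]
    rw [Finset.sum_const, Nat.card_Ico, nsmul_eq_mul, Nat.cast_sub hs]
  rw [h1, h2]

lemma approx_step' (r : ℝ) (N a : ℕ) (ha : |r| * N ≤ a) :
    ∃ s : ℕ, s ≤ a ∧ |2 * (s : ℝ) - a - r * N| ≤ 2 := by
  have hnn : (0:ℝ) ≤ (r * N + a) / 2 := by
    have : -(a:ℝ) ≤ r * N := by nlinarith [neg_abs_le r, abs_nonneg r, Nat.cast_nonneg (α := ℝ) N]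
    linarith
  refine ⟨⌊(r * N + a) / 2⌋₊, ?_, ?_⟩
  · have : (r * N + a) / 2 ≤ (a : ℝ) := by nlinarith [le_abs_self r, Nat.cast_nonneg (α := ℝ) N]
    calc ⌊(r * N + a) / 2⌋₊ ≤ ⌊(a:ℝ)⌋₊ := Nat.floor_mono this
      _ = a := Nat.floor_natCast a
  · have h1 : (⌊(r * N + a) / 2⌋₊ : ℝ) ≤ (r * N + a) / 2 := Nat.floor_le hnn
    have h2 : (r * N + a) / 2 - 1 < ⌊(r * N + a) / 2⌋₊ := Nat.sub_one_lt_floor _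
    rw [abs_le]
    constructor <;> nlinarith

lemma exists_F' (n m a b : ℕ)
    (s₁ s₂ : Fin n → Fin m → ℕ) (hs₁ : ∀ i l, s₁ i l ≤ a) (hs₂ : ∀ i l, s₂ i l ≤ b) :
    ∃ F : Fin (a + b) → Matrix (Fin n) (Fin m) ℂ,
      (∀ j, (∀ i l, F j i l = 1 ∨ F j i l = -1) ∨
        (∀ i l, F j i l = Complex.I ∨ F j i l = -Complex.I)) ∧
      ∀ i l, (∑ j, F j) i l
        = (2 * (s₁ i l : ℂ) - a) + (2 * (s₂ i l : ℂ) - b) * Complex.I := by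
  refine ⟨fun j => Matrix.of fun i l =>
      if (j : ℕ) < a then (if (j : ℕ) < s₁ i l then 1 else -1)
      else (if (j : ℕ) - a < s₂ i l then Complex.I else -Complex.I), ?_, ?_⟩
  · intro j
    by_cases hj : (j : ℕ) < a
    · left; intro i l; simp only [Matrix.of_apply, if_pos hj]
      by_cases h : (j : ℕ) < s₁ i l <;> simp [h]
    · right; intro i l; simp only [Matrix.of_apply, if_neg hj]
      by_cases h : (j : ℕ) - a < s₂ i l <;> simp [h]
  · intro i l
    rw [Matrix.sum_apply]
    rw [Fin.sum_univ_add (fun j => _)]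
    have e1 : ∑ j : Fin a,
        (Matrix.of fun i l => if ((Fin.castAdd b j : Fin (a+b)) : ℕ) < a then (if ((Fin.castAdd b j : Fin (a+b)) : ℕ) < s₁ i l then (1:ℂ) else -1) else (if ((Fin.castAdd b j : Fin (a+b)) : ℕ) - a < s₂ i l then Complex.I else -Complex.I)) i l
        = 2 * (s₁ i l : ℂ) - a := by
      have : ∀ j : Fin a, (Matrix.of fun i l => if ((Fin.castAdd b j : Fin (a+b)) : ℕ) < a then (if ((Fin.castAdd b j : Fin (a+b)) : ℕ) < s₁ i l then (1:ℂ) else -1) else (if ((Fin.castAdd b j : Fin (a+b)) : ℕ) - a < s₂ i l then Complex.I else -Complex.I)) i l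
          = if (j : ℕ) < s₁ i l then (1:ℂ) else -1 := by
        intro j
        simp only [Matrix.of_apply, Fin.coe_castAdd, if_pos j.isLt]
      rw [Finset.sum_congr rfl (fun j _ => this j), sum_if_lt' a (s₁ i l) (hs₁ i l)]
      ring
    have e2 : ∑ j : Fin b,
        (Matrix.of fun i l => if ((Fin.natAdd a j : Fin (a+b)) : ℕ) < a then (if ((Fin.natAdd a j : Fin (a+b)) : ℕ) < s₁ i l then (1:ℂ) else -1) else (if ((Fin.natAdd a j : Fin (a+b)) : ℕ) - a < s₂ i l then Complex.I else -Complex.I)) i l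
        = (2 * (s₂ i l : ℂ) - b) * Complex.I := by
      have : ∀ j : Fin b, (Matrix.of fun i l => if ((Fin.natAdd a j : Fin (a+b)) : ℕ) < a then (if ((Fin.natAdd a j : Fin (a+b)) : ℕ) < s₁ i l then (1:ℂ) else -1) else (if ((Fin.natAdd a j : Fin (a+b)) : ℕ) - a < s₂ i l then Complex.I else -Complex.I)) i l
          = if (j : ℕ) < s₂ i l then Complex.I else -Complex.I := by
        intro j
        simp only [Matrix.of_apply, Fin.coe_natAdd, if_neg (Nat.not_lt.mpr (Nat.le_add_right a j)),
          Nat.add_sub_cancel_left]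
      rw [Finset.sum_congr rfl (fun j _ => this j), sum_if_lt' b (s₂ i l) (hs₂ i l)]
      ring
    rw [e1, e2]

end Helpers

lemma opNorm_le_sum' {ι κ : Type*} [Fintype ι] [Fintype κ] [DecidableEq κ]
    (A : Matrix ι κ ℂ) : opNorm A ≤ ∑ i, ∑ l, ‖A i l‖ := by
  apply ContinuousLinearMap.opNorm_le_bound _
    (Finset.sum_nonneg fun i _ => Finset.sum_nonneg fun l _ => norm_nonneg _)
  intro x
  simp only [LinearMap.coe_toContinuousLinearMap']
  rw [Matrix.toEuclideanLin_apply]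
  calc ‖(WithLp.equiv 2 (ι → ℂ)).symm (Matrix.mulVec A ((WithLp.equiv 2 (κ → ℂ)) x))‖
      ≤ ∑ i, ‖(Matrix.mulVec A ((WithLp.equiv 2 (κ → ℂ)) x)) i‖ := euclid_norm_le_sum' _
    _ ≤ ∑ i, ∑ l, ‖A i l‖ * ‖x‖ := by
        apply Finset.sum_le_sum
        intro i _
        rw [Matrix.mulVec, dotProduct]
        calc ‖∑ l, A i l * x l‖ ≤ ∑ l, ‖A i l * x l‖ := norm_sum_le _ _
          _ ≤ ∑ l, ‖A i l‖ * ‖x‖ := by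
              apply Finset.sum_le_sum
              intro l _
              rw [norm_mul]
              exact mul_le_mul_of_nonneg_left (coord_le' x l) (norm_nonneg _)
    _ = (∑ i, ∑ l, ‖A i l‖) * ‖x‖ := by rw [Finset.sum_mul]; simp [Finset.sum_mul]

theorem approx_complex_matrix_by_pm_one_pm_i
    (n m : ℕ) (hn : 0 < n) (hm : 0 < m) (V : Matrix (Fin n) (Fin m) ℂ)
    (δ : ℝ) (hδ : 0 < δ) :
    ∃ (N k : ℕ), 0 < N ∧ 0 < k ∧ Nat.gcd k n = 1 ∧
      ∃ F : Fin k → Matrix (Fin n) (Fin m) ℂ,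
        (∀ j : Fin k,
          (∀ (i : Fin n) (l : Fin m), F j i l = 1 ∨ F j i l = -1) ∨
          (∀ (i : Fin n) (l : Fin m), F j i l = Complex.I ∨ F j i l = -Complex.I)) ∧
        opNorm (V - ((N : ℂ)⁻¹ : ℂ) • ∑ j, F j) < δ := by
  classical
  set Csum := ∑ i, ∑ l, ‖V i l‖ with hCsum
  set B := ⌈Csum⌉₊ with hB
  have habsle : ∀ (i : Fin n) (l : Fin m), ‖V i l‖ ≤ B := by
    intro i l
    have h1 : ‖V i l‖ ≤ Csum := by
      calc ‖V i l‖ ≤ ∑ l', ‖V i l'‖ :=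
            Finset.single_le_sum (f := fun l' => ‖V i l'‖)
              (fun _ _ => norm_nonneg _) (Finset.mem_univ l)
        _ ≤ Csum := Finset.single_le_sum (f := fun i' => ∑ l', ‖V i' l'‖)
            (fun _ _ => Finset.sum_nonneg fun _ _ => norm_nonneg _) (Finset.mem_univ i)
    exact h1.trans (Nat.le_ceil Csum)
  set N := ⌈6 * n * m / δ⌉₊ + 1 with hNdef
  have hN : 0 < N := Nat.succ_pos _
  have hNpos : (0:ℝ) < N := by exact_mod_cast hN
  have hNδ : 6 * n * m / δ < N := (Nat.le_ceil _).trans_lt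
    (by rw [hNdef]; push_cast; linarith [Nat.lt_succ_self ⌈6 * n * m / δ⌉₊])
  set a := n * (B * N + 1) with hadef
  set b := a + 1 with hbdef
  have hBNa : B * N ≤ a := by
    rw [hadef]
    calc B * N ≤ B * N + 1 := Nat.le_succ _
      _ ≤ n * (B * N + 1) := Nat.le_mul_of_pos_left _ hn
  have hBNb : B * N ≤ b := hBNa.trans (Nat.le_succ a)
  -- choose s₁ s₂
  have H1 : ∀ (i : Fin n) (l : Fin m), ∃ s : ℕ, s ≤ a ∧
      |2 * (s : ℝ) - a - (V i l).re * N| ≤ 2 := by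
    intro i l
    apply approx_step'
    calc |(V i l).re| * N ≤ (B : ℝ) * N := by
          apply mul_le_mul_of_nonneg_right _ hNpos.le
          exact (Complex.abs_re_le_norm _).trans (habsle i l)
      _ ≤ a := by exact_mod_cast hBNa
  have H2 : ∀ (i : Fin n) (l : Fin m), ∃ s : ℕ, s ≤ b ∧
      |2 * (s : ℝ) - b - (V i l).im * N| ≤ 2 := by
    intro i l
    apply approx_step'
    calc |(V i l).im| * N ≤ (B : ℝ) * N := by
          apply mul_le_mul_of_nonneg_right _ hNpos.le
          exact (Complex.abs_im_le_norm _).trans (habsle i l)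
      _ ≤ b := by exact_mod_cast hBNb
  have hgcd : Nat.gcd (a + b) n = 1 := by
    have h : a + b = 1 + n * (2 * (B * N + 1)) := by rw [hbdef, hadef]; ring
    rw [h]
    exact (Nat.coprime_add_mul_left_left 1 n _).mpr (Nat.coprime_one_left n)
  clear_value B N a b
  choose s₁ hs₁a hs₁e using H1
  choose s₂ hs₂b hs₂e using H2
  obtain ⟨F, hF1, hF2⟩ := exists_F' n m a b s₁ s₂ hs₁a hs₂b
  refine ⟨N, a + b, hN, by omega, hgcd, F, hF1, ?_⟩
  · -- norm bound
    have hentry : ∀ (i : Fin n) (l : Fin m),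
        ‖(V - ((N : ℂ)⁻¹ : ℂ) • ∑ j, F j) i l‖ ≤ 4 / N := by
      intro i l
      have hru : |(V i l).re - (2 * (s₁ i l : ℝ) - a) / N| ≤ 2 / N := by
        have e1 : (V i l).re - (2 * (s₁ i l : ℝ) - a) / N
            = -(2 * (s₁ i l : ℝ) - a - (V i l).re * N) / N := by
          field_simp
          ring
        rw [e1, abs_div, abs_neg, abs_of_pos hNpos]
        gcongr
        exact hs₁e i l
      have hiv : |(V i l).im - (2 * (s₂ i l : ℝ) - b) / N| ≤ 2 / N := by
        have e2 : (V i l).im - (2 * (s₂ i l : ℝ) - b) / N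
            = -(2 * (s₂ i l : ℝ) - b - (V i l).im * N) / N := by
          field_simp
          ring
        rw [e2, abs_div, abs_neg, abs_of_pos hNpos]
        gcongr
        exact hs₂e i l
      have hval : (V - ((N : ℂ)⁻¹ : ℂ) • ∑ j, F j) i l
          = (((V i l).re - (2 * (s₁ i l : ℝ) - a) / N : ℝ) : ℂ)
            + (((V i l).im - (2 * (s₂ i l : ℝ) - b) / N : ℝ) : ℂ) * Complex.I := by
        rw [Matrix.sub_apply, Matrix.smul_apply, hF2 i l, smul_eq_mul]
        have hN0 : ((N:ℕ):ℂ) ≠ 0 := Nat.cast_ne_zero.mpr hN.ne'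
        push_cast
        field_simp
        linear_combination (-((N:ℕ):ℂ)) * (Complex.re_add_im (V i l))
      rw [hval]
      refine (norm_add_le _ _).trans ?_
      rw [norm_mul, Complex.norm_I, mul_one, Complex.norm_real, Complex.norm_real,
        Real.norm_eq_abs, Real.norm_eq_abs]
      calc |(V i l).re - (2 * (s₁ i l : ℝ) - a) / N| + |(V i l).im - (2 * (s₂ i l : ℝ) - b) / N|
          ≤ 2 / N + 2 / N := add_le_add hru hiv
        _ = 4 / N := by ring
    calc opNorm (V - ((N : ℂ)⁻¹ : ℂ) • ∑ j, F j)
        ≤ ∑ i, ∑ l, ‖(V - ((N : ℂ)⁻¹ : ℂ) • ∑ j, F j) i l‖ := opNorm_le_sum' _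
      _ ≤ ∑ _i : Fin n, ∑ _l : Fin m, 4 / (N:ℝ) :=
          Finset.sum_le_sum fun i _ => Finset.sum_le_sum fun l _ => hentry i l
      _ = n * m * (4 / N) := by simp [Finset.sum_const, mul_assoc]
      _ < δ := by
          rw [div_lt_iff₀ hδ] at hNδ
          have he : (n:ℝ) * m * (4 / N) = (4 * n * m) / N := by ring
          rw [he, div_lt_iff₀ hNpos]
          nlinarith [Nat.cast_nonneg (α := ℝ) n, Nat.cast_nonneg (α := ℝ) m]
end

section
/- Let W be an n×n complex matrix with operator norm ‖W‖ ≤ 1 and let N ≥ 1 be an integer. Then there exists an (N+1)n × (N+1)n unitary complex matrix U such that W^k = J* U^k J for every k with 1 ≤ k ≤ N, where J : ℂ^n → ℂ^{(N+1)n} is the isometric embedding onto the first n coordinates and J* is its adjoint (the projection onto the first n coordinates). -/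
open Matrix Polynomial
open scoped ComplexOrder Matrix.Norms.L2Operator

namespace EgervaryAux

variable {m : Type*} [Fintype m] [DecidableEq m]

/-- the square root of a positive semidefinite matrix (as in the old Mathlib) -/
noncomputable def _root_.Matrix.PosSemidef.sqrt {A : Matrix m m ℂ} (hA : A.PosSemidef) :
    Matrix m m ℂ :=
  (hA.1.eigenvectorUnitary : Matrix m m ℂ) *
    Matrix.diagonal (fun i => ((Real.sqrt (hA.1.eigenvalues i) : ℝ) : ℂ)) *
    star (hA.1.eigenvectorUnitary : Matrix m m ℂ)

lemma spec_eq {A : Matrix m m ℂ} (hA : A.IsHermitian) :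
    A = (hA.eigenvectorUnitary : Matrix m m ℂ) * Matrix.diagonal (RCLike.ofReal ∘ hA.eigenvalues) *
      star (hA.eigenvectorUnitary : Matrix m m ℂ) :=
  hA.spectral_theorem

lemma _root_.Matrix.PosSemidef.posSemidef_sqrt {A : Matrix m m ℂ} (hA : A.PosSemidef) :
    hA.sqrt.PosSemidef := by
  have hD : (Matrix.diagonal (fun i => ((Real.sqrt (hA.1.eigenvalues i) : ℝ) : ℂ))).PosSemidef :=
    Matrix.posSemidef_diagonal_iff.mpr fun i => Complex.zero_le_real.mpr (Real.sqrt_nonneg _)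
  have := hD.mul_mul_conjTranspose_same (hA.1.eigenvectorUnitary : Matrix m m ℂ)
  rwa [← Matrix.star_eq_conjTranspose] at this

lemma _root_.Matrix.PosSemidef.sqrt_mul_self {A : Matrix m m ℂ} (hA : A.PosSemidef) :
    hA.sqrt * hA.sqrt = A := by
  have hU := (Matrix.mem_unitaryGroup_iff').mp hA.1.eigenvectorUnitary.2
  unfold Matrix.PosSemidef.sqrt
  set U : Matrix m m ℂ := (hA.1.eigenvectorUnitary : Matrix m m ℂ)
  set D := Matrix.diagonal (fun i => ((Real.sqrt (hA.1.eigenvalues i) : ℝ) : ℂ))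
  calc U * D * star U * (U * D * star U) = U * D * (star U * U) * D * star U := by noncomm_ring
    _ = U * (D * D) * star U := by rw [hU]; noncomm_ring
    _ = A := by
      rw [Matrix.diagonal_mul_diagonal]
      conv_rhs => rw [spec_eq hA.1]
      congr 2
      refine Matrix.diagonal_eq_diagonal_iff.mpr fun i => ?_
      simp only [Function.comp_apply]
      rw [← Complex.ofReal_mul, Real.mul_self_sqrt (hA.eigenvalues_nonneg i)]
      rfl


lemma pow_conj {A V D : Matrix m m ℂ} (hrep : A = V * D * star V)
    (hV : star V * V = 1) (k : ℕ) : A ^ k = V * D ^ k * star V := by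
  induction k with
  | zero => simp [mul_eq_one_comm.mp hV]
  | succ k ih =>
      rw [pow_succ, ih, hrep, pow_succ]
      calc V * D ^ k * star V * (V * D * star V)
          = V * D ^ k * (star V * V) * D * star V := by noncomm_ring
        _ = V * (D ^ k * D) * star V := by rw [hV]; noncomm_ring

lemma aeval_conj {A V D : Matrix m m ℂ} (hrep : A = V * D * star V)
    (hV : star V * V = 1) (q : ℂ[X]) :
    Polynomial.aeval A q = V * Polynomial.aeval D q * star V := by
  induction q using Polynomial.induction_on' with
  | add p q hp hq => rw [map_add, hp, hq, map_add]; noncomm_ring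
  | monomial k c =>
      rw [aeval_monomial, aeval_monomial, pow_conj hrep hV k]
      calc algebraMap ℂ (Matrix m m ℂ) c * (V * D ^ k * star V)
          = c • (V * D ^ k * star V) := by
            rw [Algebra.algebraMap_eq_smul_one, smul_mul_assoc, one_mul]
        _ = V * (c • D ^ k) * star V := by
            simp [Matrix.mul_smul, Matrix.smul_mul]
        _ = V * (algebraMap ℂ (Matrix m m ℂ) c * D ^ k) * star V := by
            rw [Algebra.algebraMap_eq_smul_one, smul_mul_assoc, one_mul]

lemma aeval_diagonal (d : m → ℂ) (q : ℂ[X]) :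
    Polynomial.aeval (Matrix.diagonal d) q = Matrix.diagonal (fun i => q.eval (d i)) := by
  induction q using Polynomial.induction_on' with
  | add p q hp hq =>
      rw [map_add, hp, hq]
      ext i j
      by_cases h : i = j <;> simp [Matrix.diagonal_apply, h]
  | monomial k c =>
      rw [aeval_monomial, Matrix.algebraMap_eq_diagonal, Matrix.diagonal_pow,
        Matrix.diagonal_mul_diagonal]
      congr 1
      funext i
      simp [eval_monomial]

lemma pow_intertwine {A B M : Matrix m m ℂ} (h : M * A = B * M) (k : ℕ) :
    M * A ^ k = B ^ k * M := by
  induction k with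
  | zero => simp
  | succ k ih =>
      rw [pow_succ, pow_succ, ← mul_assoc, ih, mul_assoc, h, ← mul_assoc]

lemma aeval_intertwine {A B M : Matrix m m ℂ} (h : M * A = B * M) (q : ℂ[X]) :
    M * Polynomial.aeval A q = Polynomial.aeval B q * M := by
  induction q using Polynomial.induction_on' with
  | add p q hp hq => rw [map_add, map_add, mul_add, add_mul, hp, hq]
  | monomial k c =>
      rw [aeval_monomial, aeval_monomial, ← mul_assoc, ← Algebra.commutes c M,
        mul_assoc, pow_intertwine h k, mul_assoc]

lemma sqrt_intertwine {A B M : Matrix m m ℂ} (hA : A.PosSemidef) (hB : B.PosSemidef)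
    (h : M * A = B * M) : M * hA.sqrt = hB.sqrt * M := by
  classical
  set s : Finset ℝ :=
    Finset.univ.image hA.1.eigenvalues ∪ Finset.univ.image hB.1.eigenvalues with hs
  set p : ℝ[X] := Lagrange.interpolate s id Real.sqrt with hpdef
  have hp : ∀ x ∈ s, p.eval x = Real.sqrt x := by
    intro x hx
    exact Lagrange.eval_interpolate_at_node Real.sqrt (Set.injOn_id _) hx
  set q : ℂ[X] := p.map (algebraMap ℝ ℂ) with hqdef
  have key : ∀ (C : Matrix m m ℂ) (hC : C.PosSemidef),
      (∀ i, hC.1.eigenvalues i ∈ s) → Polynomial.aeval C q = hC.sqrt := by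
    intro C hC hmem
    rw [aeval_conj (spec_eq hC.1)
        ((Matrix.mem_unitaryGroup_iff').mp hC.1.eigenvectorUnitary.2), aeval_diagonal]
    have : hC.sqrt = (hC.1.eigenvectorUnitary : Matrix m m ℂ) *
        Matrix.diagonal (fun i => ((Real.sqrt (hC.1.eigenvalues i) : ℝ) : ℂ)) *
        star (hC.1.eigenvectorUnitary : Matrix m m ℂ) := rfl
    have hfun : (fun i => Polynomial.eval ((RCLike.ofReal ∘ hC.1.eigenvalues) i) q)
        = (fun i => ((Real.sqrt (hC.1.eigenvalues i) : ℝ) : ℂ)) := by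
      funext i
      rw [hqdef, Polynomial.eval_map,
        show ((RCLike.ofReal ∘ hC.1.eigenvalues) i : ℂ)
          = algebraMap ℝ ℂ (hC.1.eigenvalues i) from rfl,
        Polynomial.eval₂_at_apply, hp _ (hmem i)]
      rfl
    rw [hfun, this]
  have hmemA : ∀ i, hA.1.eigenvalues i ∈ s := fun i =>
    Finset.mem_union_left _ (Finset.mem_image_of_mem _ (Finset.mem_univ i))
  have hmemB : ∀ i, hB.1.eigenvalues i ∈ s := fun i =>
    Finset.mem_union_right _ (Finset.mem_image_of_mem _ (Finset.mem_univ i))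
  rw [← key A hA hmemA, ← key B hB hmemB]
  exact aeval_intertwine h q



lemma psd_one_sub {n : ℕ} (M : Matrix (Fin n) (Fin n) ℂ) (h : ‖M‖ ≤ 1) :
    (1 - Mᴴ * M).PosSemidef := by
  refine Matrix.PosSemidef.of_dotProduct_mulVec_nonneg ?_ ?_
  · unfold Matrix.IsHermitian
    rw [conjTranspose_sub, conjTranspose_mul, conjTranspose_conjTranspose, conjTranspose_one]
  · intro x
    set X : EuclideanSpace ℂ (Fin n) := (WithLp.equiv 2 (Fin n → ℂ)).symm x with hX
    have hxX : x = WithLp.equiv 2 (Fin n → ℂ) X := rfl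
    set Y : EuclideanSpace ℂ (Fin n) := (WithLp.equiv 2 (Fin n → ℂ)).symm (M *ᵥ x) with hY
    have key : star x ⬝ᵥ ((1 - Mᴴ * M) *ᵥ x)
        = (inner ℂ X X) - (inner ℂ Y Y) := by
      rw [sub_mulVec, one_mulVec, dotProduct_sub]
      congr 1
      · rw [EuclideanSpace.inner_eq_star_dotProduct, dotProduct_comm]
        rfl
      · rw [EuclideanSpace.inner_eq_star_dotProduct, dotProduct_comm (WithLp.ofLp Y)]
        have hYe : WithLp.ofLp Y = M *ᵥ x := rfl
        rw [hYe, ← mulVec_mulVec, dotProduct_mulVec, ← star_mulVec]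
    rw [key, inner_self_eq_norm_sq_to_K, inner_self_eq_norm_sq_to_K]
    have hYX : ‖Y‖ ≤ ‖X‖ := by
      have := M.l2_opNorm_mulVec X
      have h2 : ‖M‖ * ‖X‖ ≤ 1 * ‖X‖ :=
        mul_le_mul_of_nonneg_right h (norm_nonneg X)
      rw [one_mul] at h2
      exact le_trans (le_of_le_of_eq this rfl) h2
    have h2 := pow_le_pow_left₀ (norm_nonneg Y) hYX 2
    have h3 : (0:ℂ) ≤ ((‖X‖^2 - ‖Y‖^2 : ℝ) : ℂ) := by
      rw [Complex.zero_le_real]; linarith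
    convert h3 using 1
    push_cast
    norm_num [RCLike.ofReal_alg]



lemma sum_fin_ite {N : ℕ} (t : ℕ) (f : Fin N → ℂ) :
    (∑ l : Fin N, if (l : ℕ) = t then f l else 0) = if h : t < N then f ⟨t, h⟩ else 0 := by
  by_cases h : t < N
  · rw [dif_pos h, Finset.sum_eq_single (⟨t, h⟩ : Fin N)]
    · simp
    · intro l _ hl
      have : (l : ℕ) ≠ t := fun hc => hl (Fin.ext hc)
      simp [this]
    · simp
  · rw [dif_neg h]
    apply Finset.sum_eq_zero
    intro l _
    have hl := l.isLt
    have : (l : ℕ) ≠ t := by omega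
    simp [this]

section Construction

variable {n N : ℕ}

/-- top-right block -/
def B1 (DWs : Matrix (Fin n) (Fin n) ℂ) : Matrix (Fin n) (Fin N × Fin n) ℂ :=
  fun a q => if (q.1 : ℕ) + 1 = N then DWs a q.2 else 0

/-- bottom-left block -/
def C1 (DW : Matrix (Fin n) (Fin n) ℂ) : Matrix (Fin N × Fin n) (Fin n) ℂ :=
  fun p b => if (p.1 : ℕ) = 0 then DW p.2 b else 0

/-- bottom-right block -/
def D1 (W : Matrix (Fin n) (Fin n) ℂ) : Matrix (Fin N × Fin n) (Fin N × Fin n) ℂ :=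
  fun p q => (if (p.1 : ℕ) = 0 ∧ (q.1 : ℕ) + 1 = N then -(Wᴴ p.2 q.2) else 0) +
    (if (p.1 : ℕ) = (q.1 : ℕ) + 1 ∧ p.2 = q.2 then 1 else 0)

def U0 (W DW DWs : Matrix (Fin n) (Fin n) ℂ) :
    Matrix (Fin n ⊕ Fin N × Fin n) (Fin n ⊕ Fin N × Fin n) ℂ :=
  Matrix.fromBlocks W (B1 DWs) (C1 DW) (D1 W)

variable (hN : 1 ≤ N) (W DW DWs : Matrix (Fin n) (Fin n) ℂ)
  (h1 : DWᴴ = DW) (h2 : DWsᴴ = DWs)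
  (h3 : DW * DW = 1 - Wᴴ * W) (h4 : DWs * DWs = 1 - W * Wᴴ)
  (h5 : Wᴴ * DWs = DW * Wᴴ)

include hN h1 h3 in
lemma block_one : Wᴴ * W + (C1 DW (N := N))ᴴ * (C1 DW : Matrix (Fin N × Fin n) (Fin n) ℂ) = 1 := by
  have hC : (C1 DW (N := N))ᴴ * (C1 DW : Matrix (Fin N × Fin n) (Fin n) ℂ) = DW * DW := by
    ext a b
    rw [Matrix.mul_apply, Fintype.sum_prod_type]
    simp only [conjTranspose_apply, C1]
    have : ∀ l : Fin N, (∑ c : Fin n, star (if (l : ℕ) = 0 then DW c a else 0) *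
        (if (l : ℕ) = 0 then DW c b else 0)) =
        if (l : ℕ) = 0 then (∑ c : Fin n, star (DW c a) * DW c b) else 0 := by
      intro l
      by_cases hl : (l : ℕ) = 0 <;> simp [hl]
    rw [Finset.sum_congr rfl fun l _ => this l, sum_fin_ite 0 _, dif_pos (by omega : 0 < N)]
    have : ∑ c : Fin n, star (DW c a) * DW c b = (DWᴴ * DW) a b := by
      rw [Matrix.mul_apply]; simp [conjTranspose_apply]
    rw [this, h1]
  rw [hC, h3]
  noncomm_ring

end Construction

section Construction2
variable {n N : ℕ}
variable (hN : 1 ≤ N) {W DW DWs : Matrix (Fin n) (Fin n) ℂ}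
  (h1 : DWᴴ = DW) (h2 : DWsᴴ = DWs)
  (h3 : DW * DW = 1 - Wᴴ * W) (h4 : DWs * DWs = 1 - W * Wᴴ)
  (h5 : Wᴴ * DWs = DW * Wᴴ)

include hN h1 h5 in
lemma block_two : Wᴴ * B1 DWs (N := N) + (C1 DW (N := N))ᴴ * (D1 W : Matrix (Fin N × Fin n) (Fin N × Fin n) ℂ) = 0 := by
  ext a q
  obtain ⟨j, b⟩ := q
  have h0N : ¬ ((0:ℕ) = N) := by omega
  have hWB : (Wᴴ * B1 DWs (N := N)) a (j, b) =
      if (j : ℕ) + 1 = N then (Wᴴ * DWs) a b else 0 := by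
    rw [Matrix.mul_apply]
    by_cases hj : (j : ℕ) + 1 = N
    · rw [if_pos hj, Matrix.mul_apply]
      exact Finset.sum_congr rfl fun c _ => by simp [B1, hj]
    · rw [if_neg hj]
      exact Finset.sum_eq_zero fun c _ => by simp [B1, hj]
  have hCD : (((C1 DW (N := N))ᴴ * (D1 W : Matrix (Fin N × Fin n) (Fin N × Fin n) ℂ) : Matrix (Fin n) (Fin N × Fin n) ℂ)) a (j, b) =
      if (j : ℕ) + 1 = N then -((DW * Wᴴ) a b) else 0 := by
    rw [Matrix.mul_apply, Fintype.sum_prod_type]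
    have inner : ∀ l : Fin N, (∑ c : Fin n, ((C1 DW (N := N))ᴴ) a (l, c) * D1 W (l, c) (j, b)) =
        if (l : ℕ) = 0 then (if (j : ℕ) + 1 = N then
          -(∑ c : Fin n, star (DW c a) * Wᴴ c b) else 0) else 0 := by
      intro l
      by_cases hl : (l : ℕ) = 0
      · by_cases hj : (j : ℕ) + 1 = N
        · rw [if_pos hl, if_pos hj, ← Finset.sum_neg_distrib]
          refine Finset.sum_congr rfl fun c _ => ?_
          have hlj : ¬ ((l : ℕ) = (j : ℕ) + 1) := by omega
          simp [C1, D1, conjTranspose_apply, hl, hj, hlj, h0N]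
        · rw [if_pos hl, if_neg hj]
          refine Finset.sum_eq_zero fun c _ => ?_
          have hlj : ¬ ((l : ℕ) = (j : ℕ) + 1) := by omega
          simp [C1, D1, conjTranspose_apply, hl, hj, hlj, h0N]
      · rw [if_neg hl]
        exact Finset.sum_eq_zero fun c _ => by simp [C1, conjTranspose_apply, hl]
    rw [Finset.sum_congr rfl fun l _ => inner l, sum_fin_ite 0 _,
      dif_pos (show 0 < N by omega)]
    have : ∑ c : Fin n, star (DW c a) * Wᴴ c b = (DW * Wᴴ) a b := by
      have hh : ∑ c : Fin n, star (DW c a) * Wᴴ c b = (DWᴴ * Wᴴ) a b := by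
        rw [Matrix.mul_apply]; simp [conjTranspose_apply]
      rw [hh, h1]
    rw [this]
  rw [Matrix.add_apply, hWB, hCD]
  by_cases hj : (j : ℕ) + 1 = N
  · simp only [if_pos hj]
    rw [h5]
    simp
  · simp [hj]

end Construction2

section Construction3
variable {n N : ℕ}
variable (hN : 1 ≤ N) {W DW DWs : Matrix (Fin n) (Fin n) ℂ}
  (h1 : DWᴴ = DW) (h2 : DWsᴴ = DWs)
  (h3 : DW * DW = 1 - Wᴴ * W) (h4 : DWs * DWs = 1 - W * Wᴴ)
  (h5 : Wᴴ * DWs = DW * Wᴴ)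

include hN h2 h4 in
lemma block_four :
    (B1 DWs (N := N))ᴴ * (B1 DWs : Matrix (Fin n) (Fin N × Fin n) ℂ) + (D1 W (N := N))ᴴ * (D1 W : Matrix (Fin N × Fin n) (Fin N × Fin n) ℂ) = 1 := by
  ext p q
  obtain ⟨j, a⟩ := p
  obtain ⟨j', b⟩ := q
  have hBB : ((B1 DWs (N := N))ᴴ * (B1 DWs : Matrix (Fin n) (Fin N × Fin n) ℂ) :
      Matrix (Fin N × Fin n) (Fin N × Fin n) ℂ) (j, a) (j', b) =
      if (j : ℕ) + 1 = N ∧ (j' : ℕ) + 1 = N then (DWs * DWs) a b else 0 := by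
    rw [Matrix.mul_apply]
    by_cases hj : (j : ℕ) + 1 = N
    · by_cases hj' : (j' : ℕ) + 1 = N
      · rw [if_pos ⟨hj, hj'⟩]
        have : ∑ c : Fin n, star (DWs c a) * DWs c b = (DWsᴴ * DWs) a b := by
          rw [Matrix.mul_apply]; simp [conjTranspose_apply]
        rw [← h2]; rw [h2] at this ⊢
        rw [← this]
        exact Finset.sum_congr rfl fun c _ => by simp [B1, hj, hj', conjTranspose_apply]
      · rw [if_neg (by tauto)]
        exact Finset.sum_eq_zero fun c _ => by simp [B1, hj, hj', conjTranspose_apply]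
    · rw [if_neg (by tauto)]
      exact Finset.sum_eq_zero fun c _ => by simp [B1, hj, conjTranspose_apply]
  have hDD : ((D1 W (N := N))ᴴ * (D1 W : Matrix (Fin N × Fin n) (Fin N × Fin n) ℂ) :
      Matrix (Fin N × Fin n) (Fin N × Fin n) ℂ) (j, a) (j', b) =
      (if (j : ℕ) + 1 = N ∧ (j' : ℕ) + 1 = N then (W * Wᴴ) a b else 0)
      + (if (j : ℕ) = (j' : ℕ) ∧ (j : ℕ) + 1 < N ∧ a = b then 1 else 0) := by
    rw [Matrix.mul_apply, Fintype.sum_prod_type]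
    have inner : ∀ l : Fin N, (∑ c : Fin n,
        ((D1 W (N := N))ᴴ) (j, a) (l, c) * D1 W (l, c) (j', b)) =
        (if (l : ℕ) = 0 then
          (if (j : ℕ) + 1 = N ∧ (j' : ℕ) + 1 = N then (W * Wᴴ) a b else 0) else 0)
        + (if (l : ℕ) = (j : ℕ) + 1 then
          (if (j : ℕ) = (j' : ℕ) ∧ a = b then 1 else 0) else 0) := by
      intro l
      have hterm : ∀ c : Fin n,
          ((D1 W (N := N))ᴴ) (j, a) (l, c) * D1 W (l, c) (j', b) =
          (if (l : ℕ) = 0 ∧ (j : ℕ) + 1 = N ∧ (j' : ℕ) + 1 = N then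
            star (Wᴴ c a) * Wᴴ c b else 0)
          + (if (l : ℕ) = (j : ℕ) + 1 ∧ (l : ℕ) = (j' : ℕ) + 1 ∧ c = a ∧ c = b then
            1 else 0) := by
        intro c
        simp only [conjTranspose_apply, D1, star_add, apply_ite (star : ℂ → ℂ), star_neg,
          star_zero, star_one]
        by_cases hA : (l : ℕ) = 0
        · have hBf : ¬ ((l : ℕ) = (j : ℕ) + 1 ∧ c = a) := by rintro ⟨h', -⟩; omega
          have hDf : ¬ ((l : ℕ) = (j' : ℕ) + 1 ∧ c = b) := by rintro ⟨h', -⟩; omega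
          have hSf : ¬ ((l : ℕ) = (j : ℕ) + 1 ∧ (l : ℕ) = (j' : ℕ) + 1 ∧ c = a ∧ c = b) := by
            rintro ⟨h', -⟩; omega
          rw [if_neg hBf, if_neg hDf, if_neg hSf, add_zero, add_zero, add_zero]
          by_cases hj : (j : ℕ) + 1 = N
          · by_cases hj' : (j' : ℕ) + 1 = N
            · rw [if_pos ⟨hA, hj⟩, if_pos ⟨hA, hj'⟩, if_pos ⟨hA, hj, hj'⟩, neg_mul_neg]
            · rw [if_pos ⟨hA, hj⟩,
                if_neg (show ¬ ((l : ℕ) = 0 ∧ (j' : ℕ) + 1 = N) from fun hc => hj' hc.2),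
                if_neg (show ¬ ((l : ℕ) = 0 ∧ (j : ℕ) + 1 = N ∧ (j' : ℕ) + 1 = N) from
                  fun hc => hj' hc.2.2), mul_zero]
          · rw [if_neg (show ¬ ((l : ℕ) = 0 ∧ (j : ℕ) + 1 = N) from fun hc => hj hc.2),
              if_neg (show ¬ ((l : ℕ) = 0 ∧ (j : ℕ) + 1 = N ∧ (j' : ℕ) + 1 = N) from
                fun hc => hj hc.2.1), zero_mul]
        · have hE1 : ¬ ((l : ℕ) = 0 ∧ (j : ℕ) + 1 = N) := by tauto
          have hE2 : ¬ ((l : ℕ) = 0 ∧ (j' : ℕ) + 1 = N) := by tauto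
          have hE3 : ¬ ((l : ℕ) = 0 ∧ (j : ℕ) + 1 = N ∧ (j' : ℕ) + 1 = N) := by tauto
          rw [if_neg hE1, if_neg hE2, if_neg hE3, zero_add, zero_add, zero_add]
          by_cases hB : (l : ℕ) = (j : ℕ) + 1 ∧ c = a
          · by_cases hD : (l : ℕ) = (j' : ℕ) + 1 ∧ c = b
            · rw [if_pos hB, if_pos hD, if_pos ⟨hB.1, hD.1, hB.2, hD.2⟩, one_mul]
            · rw [if_neg hD, if_neg (show ¬ ((l : ℕ) = (j : ℕ) + 1 ∧ (l : ℕ) = (j' : ℕ) + 1 ∧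
                c = a ∧ c = b) from fun hc => hD ⟨hc.2.1, hc.2.2.2⟩), mul_zero]
          · rw [if_neg hB, if_neg (show ¬ ((l : ℕ) = (j : ℕ) + 1 ∧ (l : ℕ) = (j' : ℕ) + 1 ∧
              c = a ∧ c = b) from fun hc => hB ⟨hc.1, hc.2.2.1⟩), zero_mul]
      rw [Finset.sum_congr rfl fun c _ => hterm c, Finset.sum_add_distrib]
      congr 1
      · by_cases hc : (l : ℕ) = 0 ∧ (j : ℕ) + 1 = N ∧ (j' : ℕ) + 1 = N
        · rw [if_pos hc.1, if_pos hc.2]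
          have : ∑ c : Fin n, star (Wᴴ c a) * Wᴴ c b = ((Wᴴ)ᴴ * Wᴴ) a b := by
            rw [Matrix.mul_apply]; simp [conjTranspose_apply]
          rw [conjTranspose_conjTranspose] at this
          rw [← this]
          exact Finset.sum_congr rfl fun c _ => by rw [if_pos hc]
        · rw [Finset.sum_congr rfl fun c _ => if_neg hc]
          simp only [Finset.sum_const_zero]
          by_cases hl : (l : ℕ) = 0
          · rw [if_pos hl, if_neg (fun hc2 => hc ⟨hl, hc2⟩)]
          · rw [if_neg hl]
      · by_cases hl : (l : ℕ) = (j : ℕ) + 1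
        · rw [if_pos hl]
          by_cases hjj : (j : ℕ) = (j' : ℕ) ∧ a = b
          · rw [if_pos hjj, Finset.sum_eq_single a]
            · rw [if_pos ⟨hl, by omega, rfl, hjj.2⟩]
            · intro c _ hca
              rw [if_neg (by tauto)]
            · simp
          · rw [if_neg hjj]
            refine Finset.sum_eq_zero fun c _ => ?_
            rw [if_neg]
            rintro ⟨hl1, hl2, rfl, rfl⟩
            exact hjj ⟨by omega, rfl⟩
        · rw [if_neg hl]
          refine Finset.sum_eq_zero fun c _ => ?_
          rw [if_neg (by tauto)]
    rw [Finset.sum_congr rfl fun l _ => inner l, Finset.sum_add_distrib,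
      sum_fin_ite 0 _, sum_fin_ite ((j : ℕ) + 1) _, dif_pos (show 0 < N by omega)]
    congr 1
    by_cases hlt : (j : ℕ) + 1 < N
    · rw [dif_pos hlt]
      by_cases hjj : (j : ℕ) = (j' : ℕ) ∧ a = b
      · rw [if_pos hjj, if_pos ⟨hjj.1, hlt, hjj.2⟩]
      · rw [if_neg hjj, if_neg (by tauto)]
    · rw [dif_neg hlt, if_neg (by tauto)]
  rw [Matrix.add_apply, hBB, hDD, Matrix.one_apply]
  have honeM : DWs * DWs + W * Wᴴ = (1 : Matrix (Fin n) (Fin n) ℂ) := by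
    rw [h4]
    noncomm_ring
  by_cases hj : (j : ℕ) + 1 = N
  · by_cases hj' : (j' : ℕ) + 1 = N
    · have hjj : j = j' := Fin.ext (by omega)
      subst hjj
      have hcond : ¬ ((j : ℕ) = (j : ℕ) ∧ (j : ℕ) + 1 < N ∧ a = b) := by
        rintro ⟨-, h2', -⟩; omega
      rw [if_pos ⟨hj, hj⟩, if_pos ⟨hj, hj⟩, if_neg hcond]
      rw [add_zero, ← Matrix.add_apply, honeM, Matrix.one_apply]
      by_cases hab : a = b
      · rw [if_pos hab, if_pos (by rw [hab])]
      · rw [if_neg hab, if_neg (fun hc => hab (by cases hc; rfl))]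
    · have hne : (j, a) ≠ (j', b) := fun hc => by cases hc; exact hj' hj
      have hcond : ¬ ((j : ℕ) = (j' : ℕ) ∧ (j : ℕ) + 1 < N ∧ a = b) := by
        rintro ⟨-, h2', -⟩; omega
      rw [if_neg (by tauto), if_neg (by tauto), if_neg hcond, if_neg hne]
      simp
  · by_cases hj' : (j' : ℕ) + 1 = N
    · have hne : (j, a) ≠ (j', b) := fun hc => by cases hc; exact hj hj'
      have hcond : ¬ ((j : ℕ) = (j' : ℕ) ∧ (j : ℕ) + 1 < N ∧ a = b) := by
        rintro ⟨h1', h2', -⟩; omega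
      rw [if_neg (by tauto), if_neg (by tauto), if_neg hcond, if_neg hne]
      simp
    · rw [if_neg (by tauto), if_neg (by tauto)]
      have hjN := j.isLt
      by_cases hjj : (j : ℕ) = (j' : ℕ) ∧ a = b
      · have hEq : (j, a) = (j', b) := by
          rw [Prod.mk.injEq]; exact ⟨Fin.ext hjj.1, hjj.2⟩
        rw [if_pos ⟨hjj.1, by omega, hjj.2⟩, if_pos hEq]
        norm_num
      · have hne : (j, a) ≠ (j', b) := fun hc => by cases hc; exact hjj ⟨rfl, rfl⟩
        rw [if_neg (fun hc => hjj ⟨hc.1, hc.2.2⟩), if_neg hne]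
        norm_num

end Construction3

section Construction4
variable {n N : ℕ}
variable (hN : 1 ≤ N) {W DW DWs : Matrix (Fin n) (Fin n) ℂ}
  (h1 : DWᴴ = DW) (h2 : DWsᴴ = DWs)
  (h3 : DW * DW = 1 - Wᴴ * W) (h4 : DWs * DWs = 1 - W * Wᴴ)
  (h5 : Wᴴ * DWs = DW * Wᴴ)

include hN h1 h2 h3 h4 h5 in
lemma U0_unitary : (U0 W DW DWs (N := N))ᴴ * U0 W DW DWs = 1 := by
  rw [U0, Matrix.fromBlocks_conjTranspose, Matrix.fromBlocks_multiply]
  rw [block_one hN W DW h1 h3]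
  rw [block_two hN h1 h5]
  rw [block_four hN h2 h4]
  have h3' : (B1 DWs (N := N))ᴴ * (W : Matrix (Fin n) (Fin n) ℂ) + (D1 W (N := N))ᴴ * (C1 DW : Matrix (Fin N × Fin n) (Fin n) ℂ) = 0 := by
    have := congrArg Matrix.conjTranspose (block_two hN h1 h5 (W := W) (DWs := DWs))
    rw [Matrix.conjTranspose_add, Matrix.conjTranspose_mul, Matrix.conjTranspose_mul,
      Matrix.conjTranspose_conjTranspose, Matrix.conjTranspose_conjTranspose,
      Matrix.conjTranspose_zero] at this
    exact this
  rw [h3', Matrix.fromBlocks_one]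

end Construction4

lemma sum_fin_ite' {N : ℕ} (t : ℕ) (f : Fin N → ℂ) :
    (∑ l : Fin N, if t = (l : ℕ) + 1 then f l else 0) =
    if h : t - 1 < N ∧ 1 ≤ t then f ⟨t - 1, h.1⟩ else 0 := by
  by_cases ht : 1 ≤ t
  · have : ∀ l : Fin N, (if t = (l : ℕ) + 1 then f l else 0) =
        (if (l : ℕ) = t - 1 then f l else 0) := by
      intro l
      by_cases hl : t = (l : ℕ) + 1
      · rw [if_pos hl, if_pos (by omega)]
      · rw [if_neg hl, if_neg (by omega)]
    rw [Finset.sum_congr rfl fun l _ => this l, sum_fin_ite]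
    by_cases h : t - 1 < N
    · rw [dif_pos h, dif_pos ⟨h, ht⟩]
    · rw [dif_neg h, dif_neg (fun hc => h hc.1)]
  · rw [dif_neg (fun hc => ht hc.2)]
    exact Finset.sum_eq_zero fun l _ => if_neg (by omega)

section Construction5
variable {n N : ℕ}
variable (hN : 1 ≤ N) {W DW DWs : Matrix (Fin n) (Fin n) ℂ}

lemma U0_pow_col (k : ℕ) (hk1 : 1 ≤ k) (hkN : k ≤ N) :
    (∀ a b, (U0 W DW DWs (N := N) ^ k) (Sum.inl a) (Sum.inl b) = (W ^ k) a b) ∧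
    (∀ (j : Fin N) (a b : Fin n), (U0 W DW DWs (N := N) ^ k) (Sum.inr (j, a)) (Sum.inl b) =
      if (j : ℕ) < k then (DW * W ^ (k - 1 - (j : ℕ))) a b else 0) := by
  induction k with
  | zero => omega
  | succ k ih =>
    by_cases hk : k = 0
    · subst hk
      constructor
      · intro a b
        rw [pow_one, pow_one]
        simp [U0]
      · intro j a b
        rw [pow_one]
        simp only [U0, Matrix.fromBlocks_apply₂₁, C1]
        by_cases hj : (j : ℕ) = 0
        · rw [if_pos hj, if_pos (by omega)]
          simp
        · rw [if_neg hj, if_neg (by omega)]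
    · have hk1' : 1 ≤ k := by omega
      have hkN' : k ≤ N := by omega
      obtain ⟨ih1, ih2⟩ := ih hk1' hkN'
      have hzero : ∀ (l : Fin N) (c b : Fin n), (l : ℕ) + 1 = N →
          (U0 W DW DWs (N := N) ^ k) (Sum.inr (l, c)) (Sum.inl b) = 0 := by
        intro l c b hl
        rw [ih2 l c b, if_neg (by omega)]
      constructor
      · intro a b
        rw [pow_succ', Matrix.mul_apply, Fintype.sum_sum_type]
        have hS1 : ∑ c : Fin n, U0 W DW DWs (N := N) (Sum.inl a) (Sum.inl c) *
            (U0 W DW DWs (N := N) ^ k) (Sum.inl c) (Sum.inl b) = (W ^ (k+1)) a b := by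
          rw [pow_succ', Matrix.mul_apply]
          exact Finset.sum_congr rfl fun c _ => by rw [ih1 c b]; rfl
        have hS2 : ∑ p : Fin N × Fin n, U0 W DW DWs (N := N) (Sum.inl a) (Sum.inr p) *
            (U0 W DW DWs (N := N) ^ k) (Sum.inr p) (Sum.inl b) = 0 := by
          refine Finset.sum_eq_zero fun p _ => ?_
          obtain ⟨l, c⟩ := p
          by_cases hl : (l : ℕ) + 1 = N
          · rw [hzero l c b hl, mul_zero]
          · have : U0 W DW DWs (N := N) (Sum.inl a) (Sum.inr (l, c)) = 0 := by
              simp [U0, B1, hl]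
            rw [this, zero_mul]
        rw [hS1, hS2, add_zero]
      · intro j a b
        rw [pow_succ', Matrix.mul_apply, Fintype.sum_sum_type]
        have hS1 : ∑ c : Fin n, U0 W DW DWs (N := N) (Sum.inr (j, a)) (Sum.inl c) *
            (U0 W DW DWs (N := N) ^ k) (Sum.inl c) (Sum.inl b) =
            if (j : ℕ) = 0 then (DW * W ^ k) a b else 0 := by
          by_cases hj : (j : ℕ) = 0
          · rw [if_pos hj, Matrix.mul_apply]
            refine Finset.sum_congr rfl fun c _ => ?_
            rw [ih1 c b]
            simp [U0, C1, hj]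
          · rw [if_neg hj]
            refine Finset.sum_eq_zero fun c _ => ?_
            have : U0 W DW DWs (N := N) (Sum.inr (j, a)) (Sum.inl c) = 0 := by
              simp [U0, C1, hj]
            rw [this, zero_mul]
        have hS2 : ∑ p : Fin N × Fin n, U0 W DW DWs (N := N) (Sum.inr (j, a)) (Sum.inr p) *
            (U0 W DW DWs (N := N) ^ k) (Sum.inr p) (Sum.inl b) =
            if h : (j : ℕ) - 1 < N ∧ 1 ≤ (j : ℕ) then
              (if (j : ℕ) - 1 < k then (DW * W ^ (k - 1 - ((j : ℕ) - 1))) a b else 0)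
            else 0 := by
          rw [Fintype.sum_prod_type]
          have inner : ∀ l : Fin N, (∑ c : Fin n,
              U0 W DW DWs (N := N) (Sum.inr (j, a)) (Sum.inr (l, c)) *
              (U0 W DW DWs (N := N) ^ k) (Sum.inr (l, c)) (Sum.inl b)) =
              if (j : ℕ) = (l : ℕ) + 1 then
                (if (l : ℕ) < k then (DW * W ^ (k - 1 - (l : ℕ))) a b else 0) else 0 := by
            intro l
            by_cases hl : (l : ℕ) + 1 = N
            · rw [if_neg (by omega)]
              exact Finset.sum_eq_zero fun c _ => by rw [hzero l c b hl, mul_zero]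
            · have hU : ∀ c, U0 W DW DWs (N := N) (Sum.inr (j, a)) (Sum.inr (l, c)) =
                  if (j : ℕ) = (l : ℕ) + 1 ∧ a = c then 1 else 0 := by
                intro c
                simp only [U0, Matrix.fromBlocks_apply₂₂, D1]
                rw [if_neg (fun hc => hl hc.2), zero_add]
              by_cases hj : (j : ℕ) = (l : ℕ) + 1
              · rw [if_pos hj]
                have hsum : ∀ c : Fin n,
                    U0 W DW DWs (N := N) (Sum.inr (j, a)) (Sum.inr (l, c)) *
                    (U0 W DW DWs (N := N) ^ k) (Sum.inr (l, c)) (Sum.inl b) =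
                    if a = c then
                      (if (l : ℕ) < k then (DW * W ^ (k - 1 - (l : ℕ))) c b else 0) else 0 := by
                  intro c
                  rw [hU c, ih2 l c b]
                  by_cases hac : a = c
                  · rw [if_pos ⟨hj, hac⟩, if_pos hac, one_mul]
                  · rw [if_neg (fun hc => hac hc.2), if_neg hac, zero_mul]
                rw [Finset.sum_congr rfl fun c _ => hsum c, Finset.sum_ite_eq Finset.univ a _,
                  if_pos (Finset.mem_univ a)]
              · rw [if_neg hj]
                refine Finset.sum_eq_zero fun c _ => ?_
                rw [hU c, if_neg (fun hc => hj hc.1), zero_mul]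
          rw [Finset.sum_congr rfl fun l _ => inner l, sum_fin_ite' (j : ℕ) _]
        rw [hS1, hS2]
        have hjN := j.isLt
        by_cases hj : (j : ℕ) = 0
        · rw [if_pos hj, dif_neg (by omega), add_zero, if_pos (by omega),
            show k + 1 - 1 - (j : ℕ) = k from by omega]
        · rw [if_neg hj, dif_pos ⟨by omega, by omega⟩, zero_add]
          by_cases hlt : (j : ℕ) - 1 < k
          · rw [if_pos hlt, if_pos (by omega),
              show k - 1 - ((j : ℕ) - 1) = k - (j : ℕ) from by omega,
              show k + 1 - 1 - (j : ℕ) = k - (j : ℕ) from by omega]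
          · rw [if_neg hlt, if_neg (by omega)]

end Construction5


end EgervaryAux

open EgervaryAux in
theorem egervary_dilation
    (n N : ℕ) (hN : 1 ≤ N) (W : Matrix (Fin n) (Fin n) ℂ) (hW : opNorm W ≤ 1) :
    ∃ U : Matrix (Fin n ⊕ Fin (N * n)) (Fin n ⊕ Fin (N * n)) ℂ,
      U ∈ Matrix.unitaryGroup (Fin n ⊕ Fin (N * n)) ℂ ∧
      ∀ k : ℕ, 1 ≤ k → k ≤ N → W ^ k = (U ^ k).submatrix Sum.inl Sum.inl := by
  classical
  have hW' : ‖W‖ ≤ 1 := hW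
  have hA : (1 - Wᴴ * W).PosSemidef := psd_one_sub W hW'
  have hWc : ‖Wᴴ‖ ≤ 1 := by rw [Matrix.l2_opNorm_conjTranspose]; exact hW'
  have hB : (1 - W * Wᴴ).PosSemidef := by
    have := psd_one_sub Wᴴ hWc
    rwa [conjTranspose_conjTranspose] at this
  set DW := hA.sqrt with hDW
  set DWs := hB.sqrt with hDWs
  have h1 : DWᴴ = DW := hA.posSemidef_sqrt.1
  have h2 : DWsᴴ = DWs := hB.posSemidef_sqrt.1
  have h3 : DW * DW = 1 - Wᴴ * W := hA.sqrt_mul_self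
  have h4 : DWs * DWs = 1 - W * Wᴴ := hB.sqrt_mul_self
  have h5 : Wᴴ * DWs = DW * Wᴴ := by
    refine sqrt_intertwine hB hA ?_
    noncomm_ring
  have hU0 : (U0 W DW DWs (N := N))ᴴ * U0 W DW DWs = 1 := U0_unitary hN h1 h2 h3 h4 h5
  set e : (Fin n ⊕ Fin N × Fin n) ≃ (Fin n ⊕ Fin (N * n)) :=
    Equiv.sumCongr (Equiv.refl (Fin n)) finProdFinEquiv with he
  refine ⟨Matrix.reindexAlgEquiv ℂ ℂ e (U0 W DW DWs), ?_, ?_⟩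
  · rw [Matrix.mem_unitaryGroup_iff']
    have hstar : star (Matrix.reindexAlgEquiv ℂ ℂ e (U0 W DW DWs)) =
        Matrix.reindexAlgEquiv ℂ ℂ e (star (U0 W DW DWs)) := by
      simp [Matrix.reindexAlgEquiv_apply, Matrix.conjTranspose_reindex, Matrix.star_eq_conjTranspose]
    rw [hstar, ← _root_.map_mul, Matrix.star_eq_conjTranspose, hU0, _root_.map_one]
  · intro k hk1 hkN
    have hcol := (U0_pow_col (W := W) (DW := DW) (DWs := DWs) (N := N) k hk1 hkN).1
    ext a b
    rw [Matrix.submatrix_apply, ← _root_.map_pow]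
    rw [Matrix.reindexAlgEquiv_apply, Matrix.reindex_apply, Matrix.submatrix_apply]
    have hsa : e.symm (Sum.inl a) = Sum.inl a := rfl
    have hsb : e.symm (Sum.inl b) = Sum.inl b := rfl
    rw [hsa, hsb, hcol a b]
end

section
/- For all positive integers n and m there exists a basis of the complex vector space of n×m complex matrices consisting of nm matrices each of whose entries lies in {−1, 1}. -/
def matA (N : ℕ) : Matrix (Fin N) (Fin N) ℂ :=
  Matrix.of fun i j => if (i : ℕ) ≤ (j : ℕ) then 1 else -1

noncomputable def matB (N : ℕ) : Matrix (Fin N) (Fin N) ℂ :=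
  Matrix.of fun i j =>
    (2⁻¹ : ℂ) *
      (if h : (i : ℕ) + 1 < N then
          (if j = i then 1 else 0) - (if j = (⟨(i : ℕ) + 1, h⟩ : Fin N) then 1 else 0)
        else (if (j : ℕ) = 0 then 1 else 0) + (if j = i then 1 else 0))

lemma matB_mul_matA (N : ℕ) : matB N * matA N = 1 := by
  ext i k
  rw [Matrix.mul_apply, Matrix.one_apply]
  simp only [matA, matB, Matrix.of_apply]
  by_cases h : (i : ℕ) + 1 < N
  · simp only [dif_pos h]
    simp_rw [mul_assoc]
    rw [← Finset.mul_sum]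
    simp only [sub_mul, ite_mul, one_mul, zero_mul, Finset.sum_sub_distrib,
      Finset.sum_ite_eq', Finset.mem_univ, if_true]
    by_cases hik : (i : ℕ) ≤ (k : ℕ)
    · by_cases hik2 : (i : ℕ) + 1 ≤ (k : ℕ)
      · have : i ≠ k := by intro e; subst e; omega
        simp [hik, hik2, this]
      · have : i = k := by ext; omega
        simp [hik, hik2, this]
        norm_num
    · have : i ≠ k := by intro e; subst e; omega
      have hik2 : ¬ ((⟨(i:ℕ)+1, h⟩ : Fin N) : ℕ) ≤ (k : ℕ) := by simp; omega
      simp [hik, hik2, this]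
  · simp only [dif_neg h]
    have hN : 0 < N := i.pos
    have hrw : ∀ j : Fin N, ((j : ℕ) = 0) = (j = (⟨0, hN⟩ : Fin N)) := by
      intro j; simp [Fin.ext_iff]
    simp_rw [hrw, mul_assoc]
    rw [← Finset.mul_sum]
    simp only [add_mul, ite_mul, one_mul, zero_mul, Finset.sum_add_distrib,
      Finset.sum_ite_eq', Finset.mem_univ, if_true]
    have hi : (i : ℕ) = N - 1 := by omega
    by_cases hk : i = k
    · subst hk
      simp [hi]
      norm_num
    · have h1 : (0 : ℕ) ≤ (k : ℕ) := Nat.zero_le _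
      have h2 : ¬ ((i : ℕ) ≤ (k : ℕ)) := by have := k.isLt; omega
      simp [h1, h2, hk]

theorem exists_pm_one_basis
    (n m : ℕ) (hn : 0 < n) (hm : 0 < m) :
    ∃ b : Module.Basis (Fin (n * m)) ℂ (Matrix (Fin n) (Fin m) ℂ),
      ∀ (i : Fin (n * m)) (r : Fin n) (c : Fin m), b i r c = 1 ∨ b i r c = -1 := by
  have hAB : matA (n * m) * matB (n * m) = 1 :=
    mul_eq_one_comm.mpr (matB_mul_matA (n * m))
  let e : (Fin (n * m) → ℂ) ≃ₗ[ℂ] Matrix (Fin n) (Fin m) ℂ :=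
    Matrix.toLin'OfInv (matB_mul_matA (n * m)) hAB ≪≫ₗ
      LinearEquiv.funCongrLeft ℂ ℂ finProdFinEquiv ≪≫ₗ
      LinearEquiv.curry ℂ ℂ (Fin n) (Fin m) ≪≫ₗ Matrix.ofLinearEquiv ℂ
  refine ⟨(Pi.basisFun ℂ (Fin (n * m))).map e, fun i r c => ?_⟩
  have hb : ((Pi.basisFun ℂ (Fin (n * m))).map e) i r c
      = matA (n * m) (finProdFinEquiv (r, c)) i := by
    simp [e, Module.Basis.map_apply, Matrix.toLin'OfInv, LinearEquiv.funCongrLeft_apply]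
  rw [hb]
  by_cases hle : ((finProdFinEquiv (r, c) : Fin (n*m)) : ℕ) ≤ (i : ℕ)
  · left; simp only [matA, Matrix.of_apply, if_pos hle]
  · right; simp only [matA, Matrix.of_apply, if_neg hle]
end
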